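/- arXiv:2103.03110 — 7 statements merged into one kernel-verified Lean document; each statement's English description precedes it below -/
import Mathlib

section
/- For every complex number k with Re(k) > -1, the integral over x from 0 to 1 of artanh(x) * (-log x)^k / x (where (-log x)^k is the principal-branch complex power of the positive real -log x) equals (1 - 2^(-(k+2))) * ζ(k+2) * Γ(k+1). -/
/-- The real inverse hyperbolic tangent, `artanh x = (1/2)(log(1+x) - log(1-x))`. -/
noncomputable def artanh (x : ℝ) : ℝ := (Real.log (1 + x) - Real.log (1 - x)) / 2

open MeasureTheory Set

lemma artanh_hasSum {x : ℝ} (h : |x| < 1) :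
    HasSum (fun i : ℕ => (((2 * i + 1 : ℕ) : ℝ))⁻¹ * x ^ (2 * i + 1)) (artanh x) := by
  have H := (Real.hasSum_log_sub_log_of_abs_lt_one h).div_const 2
  have e : (fun i : ℕ => (((2 * i + 1 : ℕ) : ℝ))⁻¹ * x ^ (2 * i + 1))
      = fun i : ℕ => 2 * (1 / (2 * (i : ℝ) + 1)) * x ^ (2 * i + 1) / 2 := by
    funext i; push_cast; ring
  rw [artanh, e]
  exact H

lemma hasSum_odd_zeta {s : ℂ} (hs : 1 < s.re) :
    HasSum (fun m : ℕ => 1 / (((2 * m + 1 : ℕ) : ℂ)) ^ s)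
      ((1 - (2 : ℂ) ^ (-s)) * riemannZeta s) := by
  set f : ℕ → ℂ := fun n => 1 / ((n : ℂ) + 1) ^ s with hf_def
  have hsum0 : Summable (fun n : ℕ => 1 / (n : ℂ) ^ s) :=
    Complex.summable_one_div_nat_cpow.mpr hs
  have hsum : Summable f := by
    have := (summable_nat_add_iff (f := fun n : ℕ => 1 / (n : ℂ) ^ s) 1).mpr hsum0
    refine this.congr fun n => ?_
    simp [hf_def]
  have hf : HasSum f (riemannZeta s) := by
    rw [zeta_eq_tsum_one_div_nat_add_one_cpow hs]
    exact hsum.hasSum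
  have hodd : HasSum (fun m : ℕ => f (2 * m + 1)) ((2 : ℂ) ^ (-s) * riemannZeta s) := by
    have H := hf.mul_left ((2 : ℂ) ^ (-s))
    refine H.congr_fun fun m => ?_
    have h2 : ((2 * m + 1 : ℕ) : ℂ) + 1 = ((2 : ℝ) : ℂ) * (((m : ℝ) + 1 : ℝ) : ℂ) := by
      push_cast; ring
    have hm1 : (0 : ℝ) ≤ (m : ℝ) + 1 := by positivity
    rw [hf_def]
    simp only
    rw [h2, Complex.mul_cpow_ofReal_nonneg (by norm_num) hm1]
    rw [Complex.cpow_neg]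
    have hx : (((m : ℝ) + 1 : ℝ) : ℂ) = (m : ℂ) + 1 := by push_cast; ring
    rw [hx]
    have h2c : ((2 : ℝ) : ℂ) = (2 : ℂ) := by norm_num
    rw [h2c]
    field_simp
  have heven_summable : Summable (fun m : ℕ => f (2 * m)) :=
    hsum.comp_injective (fun a b hab => by omega)
  obtain ⟨A, hA⟩ := heven_summable
  have htot : HasSum f (A + (2 : ℂ) ^ (-s) * riemannZeta s) := hA.even_add_odd hodd
  have hAval : A = (1 - (2 : ℂ) ^ (-s)) * riemannZeta s := by
    have := hf.unique htot
    linear_combination -this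
  rw [hAval] at hA
  refine hA.congr_fun fun m => ?_
  simp only [hf_def]
  congr 2
  push_cast
  ring

theorem integral_artanh_mul_neg_log_cpow (k : ℂ) (hk : -1 < k.re) :
    ∫ x in (0:ℝ)..1, (artanh x : ℂ) * ((-Real.log x : ℝ) : ℂ) ^ k / (x : ℂ) =
      (1 - (2:ℂ) ^ (-(k + 2))) * riemannZeta (k + 2) * Complex.Gamma (k + 1) := by
  set F : ℝ → ℂ := fun t => (artanh (Real.exp (-t)) : ℂ) with hF_def
  set p : ℕ → ℝ := fun i => ((2 * i + 1 : ℕ) : ℝ) with hp_def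
  set a : ℕ → ℂ := fun i => ((p i : ℂ))⁻¹ with ha_def
  have hp_pos : ∀ i, 0 < p i := fun i => by positivity
  have hs1 : 0 < (k + 1).re := by simp [Complex.add_re]; linarith
  -- Step 1 : change of variables, LHS = mellin F (k+1)
  have hchg : (∫ x in (0:ℝ)..1, (artanh x : ℂ) * ((-Real.log x : ℝ) : ℂ) ^ k / (x : ℂ))
      = mellin F (k + 1) := by
    rw [intervalIntegral.integral_of_le zero_le_one, integral_Ioc_eq_integral_Ioo]
    have himg : (fun t : ℝ => Real.exp (-t)) '' (Ioi 0) = Ioo (0:ℝ) 1 := by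
      ext y
      constructor
      · rintro ⟨t, ht, rfl⟩
        exact ⟨Real.exp_pos _, Real.exp_lt_one_iff.mpr (by simpa using ht)⟩
      · rintro ⟨hy0, hy1⟩
        exact ⟨-Real.log y, by simpa using Real.log_neg hy0 hy1,
          by simp [Real.exp_log hy0]⟩
    have hderiv : ∀ t ∈ Ioi (0:ℝ), HasDerivWithinAt (fun t : ℝ => Real.exp (-t))
        (-Real.exp (-t)) (Ioi 0) t := by
      intro t _
      have := ((Real.hasDerivAt_exp (-t)).comp t (hasDerivAt_neg t))
      simpa [mul_comm, Function.comp_def] using this.hasDerivWithinAt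
    have hinj : InjOn (fun t : ℝ => Real.exp (-t)) (Ioi 0) :=
      (Real.exp_injective.comp neg_injective).injOn
    rw [← himg,
      integral_image_eq_integral_abs_deriv_smul measurableSet_Ioi hderiv hinj
        (fun x : ℝ => (artanh x : ℂ) * ((-Real.log x : ℝ) : ℂ) ^ k / (x : ℂ))]
    rw [mellin]
    refine setIntegral_congr_fun measurableSet_Ioi fun t ht => ?_
    have hexp : Real.log (Real.exp (-t)) = -t := Real.log_exp _
    have hne : ((Real.exp (-t)) : ℂ) ≠ 0 := by
      exact_mod_cast Complex.ofReal_ne_zero.mpr (Real.exp_ne_zero _)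
    simp only [abs_neg, abs_of_pos (Real.exp_pos _), hexp, neg_neg, Complex.real_smul, smul_eq_mul,
      hF_def, add_sub_cancel_right]
    field_simp
  -- Step 2 : hasSum_mellin
  have hmel : HasSum (fun i : ℕ => Complex.Gamma (k+1) * a i / (p i : ℂ) ^ (k+1))
      (mellin F (k + 1)) := by
    refine hasSum_mellin (fun i => Or.inr (hp_pos i)) hs1 (fun t ht => ?_) ?_
    · -- series for F t
      have hx0 : 0 < Real.exp (-t) := Real.exp_pos _
      have hx1 : |Real.exp (-t)| < 1 := by
        rw [abs_of_pos hx0]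
        exact Real.exp_lt_one_iff.mpr (by simpa using ht)
      have H := artanh_hasSum hx1
      have H2 := (Complex.hasSum_ofReal (f := fun i : ℕ =>
        (((2 * i + 1 : ℕ) : ℝ))⁻¹ * (Real.exp (-t)) ^ (2 * i + 1))).mpr H
      refine H2.congr_fun fun i => ?_
      have hpw : (Real.exp (-t)) ^ (2 * i + 1) = Real.exp (-p i * t) := by
        rw [← Real.exp_nat_mul]
        congr 1
        simp [hp_def]
        push_cast
        ring
      rw [hpw]
      simp only [ha_def, hp_def]
      push_cast
      ring
    · -- summability
      have he : 1 < k.re + 2 := by linarith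
      have hbase : Summable (fun n : ℕ => ((n : ℝ) + 1) ^ (-(k.re + 2))) := by
        have h0 : Summable (fun n : ℕ => (n : ℝ) ^ (-(k.re + 2))) :=
          Real.summable_nat_rpow.mpr (by linarith)
        have := (summable_nat_add_iff (f := fun n : ℕ => (n : ℝ) ^ (-(k.re + 2))) 1).mpr h0
        refine this.congr fun n => ?_
        push_cast
        ring_nf
      refine Summable.of_nonneg_of_le (fun i => ?_) (fun i => ?_) hbase
      · have := hp_pos i
        positivity
      · have hpi := hp_pos i
        have h1le : (i : ℝ) + 1 ≤ p i := by
          simp only [hp_def]; push_cast; linarith [(Nat.cast_nonneg i : (0:ℝ) ≤ (i:ℝ))]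
        have hnorm : ‖a i‖ = (p i)⁻¹ := by
          simp only [ha_def, norm_inv, Complex.norm_real, Real.norm_eq_abs,
            abs_of_pos hpi]
        rw [hnorm]
        have hre : (k + 1).re = k.re + 1 := by simp [Complex.add_re]
        rw [hre]
        have key : (p i)⁻¹ / (p i) ^ (k.re + 1) = (p i) ^ (-(k.re + 2)) := by
          rw [div_eq_mul_inv, ← Real.rpow_neg_one (p i) , ← Real.rpow_neg hpi.le,
            ← Real.rpow_add hpi]
          ring_nf
        rw [key]
        have h2 : ((i : ℝ) + 1) ^ (k.re + 2) ≤ (p i) ^ (k.re + 2) :=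
          Real.rpow_le_rpow (by positivity) h1le (by linarith)
        rw [Real.rpow_neg hpi.le, Real.rpow_neg (by positivity : (0:ℝ) ≤ (i : ℝ) + 1)]
        exact inv_anti₀ (by positivity) h2
  -- Step 3 : the value of the sum
  have hzeta : HasSum (fun i : ℕ => Complex.Gamma (k+1) * a i / (p i : ℂ) ^ (k+1))
      ((1 - (2:ℂ) ^ (-(k + 2))) * riemannZeta (k + 2) * Complex.Gamma (k + 1)) := by
    have hs2 : 1 < (k + 2).re := by simp [Complex.add_re]; linarith
    have H := (hasSum_odd_zeta hs2).mul_left (Complex.Gamma (k + 1))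
    have Hval : Complex.Gamma (k + 1) * ((1 - (2:ℂ) ^ (-(k + 2))) * riemannZeta (k + 2))
        = (1 - (2:ℂ) ^ (-(k + 2))) * riemannZeta (k + 2) * Complex.Gamma (k + 1) := by ring
    rw [Hval] at H
    refine H.congr_fun fun i => ?_
    have hc : ((2 * i + 1 : ℕ) : ℂ) ≠ 0 := Nat.cast_ne_zero.mpr (by omega)
    have hsplit : ((2 * i + 1 : ℕ) : ℂ) ^ (k + 2)
        = ((2 * i + 1 : ℕ) : ℂ) * ((2 * i + 1 : ℕ) : ℂ) ^ (k + 1) := by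
      have : (k + 2 : ℂ) = 1 + (k + 1) := by ring
      rw [this, Complex.cpow_add _ _ hc, Complex.cpow_one]
    have hpc : ((p i : ℝ) : ℂ) = ((2 * i + 1 : ℕ) : ℂ) := by
      simp [hp_def]
    rw [hsplit, ha_def]
    simp only [hpc]
    field_simp
  rw [hchg]
  exact hmel.unique hzeta
end

section
/- For all real numbers m > 0 and n > 0 and every complex number k with Re(k) > -1, the integral over x from 0 to 1 of (-log x)^k * log((x^m + 1)(1 - x^n)) / x (where (-log x)^k is the principal-branch complex power of the positive real -log x) equals (1/2) * ζ(k+2) * Γ(k+1) * ((2 - 2^(-k)) * m^(-k-1) - 2 * n^(-k-1)). -/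
set_option maxHeartbeats 1000000

open MeasureTheory Set Filter

private lemma natC_ne (j : ℕ) : ((j : ℂ) + 1) ≠ 0 := by
  have : ((j + 1 : ℕ) : ℂ) ≠ 0 := Nat.cast_ne_zero.mpr j.succ_ne_zero
  push_cast at this; exact this

private lemma hasSum_sumtype {M : Type*} [AddCommMonoid M] [TopologicalSpace M]
    [ContinuousAdd M] {f : ℕ ⊕ ℕ → M} {a b : M}
    (ha : HasSum (fun j ↦ f (Sum.inl j)) a) (hb : HasSum (fun j ↦ f (Sum.inr j)) b) :
    HasSum f (a + b) := by
  refine HasSum.add_isCompl Set.isCompl_range_inl_range_inr ?_ ?_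
  · exact (Equiv.ofInjective _ Sum.inl_injective).hasSum_iff.mp ha
  · exact (Equiv.ofInjective _ Sum.inr_injective).hasSum_iff.mp hb

private lemma hasSum_zeta_shift {s : ℂ} (hs : 1 < s.re) :
    HasSum (fun j : ℕ ↦ 1 / ((j : ℂ) + 1) ^ s) (riemannZeta s) := by
  have hs0 : s ≠ 0 := by
    intro h; rw [h] at hs; simp at hs; linarith
  have hsum : Summable (fun n : ℕ ↦ 1 / (n : ℂ) ^ s) :=
    Complex.summable_one_div_nat_cpow.mpr hs
  have hζ0 : HasSum (fun n : ℕ ↦ 1 / (n : ℂ) ^ s) (riemannZeta s) := by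
    rw [zeta_eq_tsum_one_div_nat_cpow hs]; exact hsum.hasSum
  have h := (hasSum_nat_add_iff (f := fun n : ℕ ↦ 1 / (n : ℂ) ^ s) 1).mpr
    (by simpa [Complex.zero_cpow hs0] using hζ0)
  refine h.congr_fun fun j ↦ ?_
  push_cast
  rfl

private lemma hasSum_eta {s : ℂ} (hs : 1 < s.re) :
    HasSum (fun j : ℕ ↦ (-1) ^ j * ((j : ℂ) + 1) ^ (-s))
      ((1 - 2 ^ (1 - s)) * riemannZeta s) := by
  have hζ := hasSum_zeta_shift hs
  have h2 : ((2 : ℂ)) ^ s ≠ 0 := by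
    intro h
    rw [Complex.cpow_eq_zero_iff] at h
    exact two_ne_zero h.1
  have hOdd : HasSum (fun i : ℕ ↦ 1 / (2 * (i : ℂ) + 2) ^ s) (riemannZeta s / 2 ^ s) := by
    refine (hζ.div_const ((2 : ℂ) ^ s)).congr_fun fun i ↦ ?_
    have hb : (2 * (i : ℂ) + 2) = (((2 : ℝ) * ((i : ℝ) + 1) : ℝ) : ℂ) := by push_cast; ring
    rw [hb, Complex.ofReal_mul, Complex.mul_cpow_ofReal_nonneg (by norm_num) (by positivity)]
    have : ((((i : ℝ) + 1) : ℝ) : ℂ) = (i : ℂ) + 1 := by push_cast; rfl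
    rw [this, div_div]
    norm_num [mul_comm]
  have hInd : HasSum (fun j : ℕ ↦ if Odd j then 1 / ((j : ℂ) + 1) ^ s else 0)
      (riemannZeta s / 2 ^ s) := by
    have hinj : Function.Injective (fun i : ℕ ↦ 2 * i + 1) := fun x y h ↦ by dsimp at h; omega
    refine (Function.Injective.hasSum_iff hinj ?_).mp ?_
    · intro j hj
      have : ¬ Odd j := by
        rintro ⟨r, hr⟩
        exact hj ⟨r, hr.symm⟩
      simp [this]
    · refine hOdd.congr_fun fun i ↦ ?_
      have : Odd (2 * i + 1) := ⟨i, rfl⟩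
      simp only [Function.comp_apply, if_pos this]
      push_cast
      ring_nf
  have hfinal := hζ.sub (hInd.mul_left 2)
  have hval : riemannZeta s - 2 * (riemannZeta s / 2 ^ s)
      = (1 - 2 ^ (1 - s)) * riemannZeta s := by
    have h21 : (2 : ℂ) ^ (1 - s) = 2 * ((2 : ℂ) ^ s)⁻¹ := by
      rw [sub_eq_add_neg, Complex.cpow_add _ _ two_ne_zero, Complex.cpow_one,
        Complex.cpow_neg]
    rw [h21]
    field_simp
  rw [hval] at hfinal
  refine hfinal.congr_fun fun j ↦ ?_
  rcases Nat.even_or_odd j with h | h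
  · rw [if_neg (Nat.not_odd_iff_even.mpr h), Even.neg_one_pow h,
      Complex.cpow_neg]
    ring
  · rw [if_pos h, Odd.neg_one_pow h, Complex.cpow_neg]
    ring

private lemma sumAux {c : ℝ} (hc : 0 < c) {r : ℝ} (hr : 0 < r) :
    Summable (fun j : ℕ ↦ (1 / ((j : ℝ) + 1)) / (c * ((j : ℝ) + 1)) ^ r) := by
  have h1 : Summable (fun j : ℕ ↦ 1 / ((j : ℝ) + 1) ^ (1 + r)) := by
    have h0 := (Real.summable_one_div_nat_rpow (p := 1 + r)).mpr (by linarith)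
    have h2 := h0.comp_injective (add_left_injective 1)
    refine h2.congr fun j ↦ ?_
    simp only [Function.comp_apply]
    push_cast
    rfl
  refine (h1.mul_left ((c ^ r)⁻¹)).congr fun j ↦ ?_
  have hj : (0 : ℝ) < (j : ℝ) + 1 := by positivity
  rw [Real.mul_rpow hc.le hj.le, Real.rpow_add hj, Real.rpow_one]
  have hcr : (0 : ℝ) < c ^ r := Real.rpow_pos_of_pos hc r
  have hjr : (0 : ℝ) < ((j : ℝ) + 1) ^ r := Real.rpow_pos_of_pos hj r
  field_simp

theorem integral_neg_log_cpow_mul_log_prod (m n : ℝ) (hm : 0 < m) (hn : 0 < n)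
    (k : ℂ) (hk : -1 < k.re) :
    ∫ x in (0:ℝ)..1,
        ((-Real.log x : ℝ) : ℂ) ^ k * (Real.log ((x ^ m + 1) * (1 - x ^ n)) : ℂ) / (x : ℂ) =
      (1 / 2) * riemannZeta (k + 2) * Complex.Gamma (k + 1) *
        ((2 - (2:ℂ) ^ (-k)) * (m : ℂ) ^ (-k - 1) - 2 * (n : ℂ) ^ (-k - 1)) := by
  set F : ℝ → ℂ :=
    fun t ↦ ((Real.log ((Real.exp (-t) ^ m + 1) * (1 - Real.exp (-t) ^ n)) : ℝ) : ℂ) with hF_def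
  set G : ℝ → ℂ := fun x ↦
    ((-Real.log x : ℝ) : ℂ) ^ k * (Real.log ((x ^ m + 1) * (1 - x ^ n)) : ℂ) / (x : ℂ)
    with hG_def
  -- Step A : the integral is a Mellin transform
  have hstepA : (∫ x in (0:ℝ)..1, G x) = mellin F (k + 1) := by
    have hIm : (fun t : ℝ ↦ Real.exp (-t)) '' (Ioi 0) = Ioo 0 1 := by
      ext y
      constructor
      · rintro ⟨t, ht, rfl⟩
        exact ⟨Real.exp_pos _, Real.exp_lt_one_iff.mpr (by simpa using ht)⟩
      · rintro ⟨h0, h1⟩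
        refine ⟨-Real.log y, ?_, by simp [Real.exp_log h0]⟩
        have := Real.log_neg h0 h1
        simpa using this
    have hderiv : ∀ t ∈ Ioi (0:ℝ),
        HasDerivWithinAt (fun t : ℝ ↦ Real.exp (-t)) (-Real.exp (-t)) (Ioi 0) t := by
      intro t _
      have := (Real.hasDerivAt_exp (-t)).comp t (hasDerivAt_neg t)
      simpa [Function.comp_def, mul_neg_one] using this.hasDerivWithinAt
    have hinj : InjOn (fun t : ℝ ↦ Real.exp (-t)) (Ioi 0) :=
      fun a _ b _ h ↦ neg_injective (Real.exp_injective h)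
    have hsub := integral_image_eq_integral_abs_deriv_smul measurableSet_Ioi hderiv hinj G
    rw [hIm] at hsub
    rw [intervalIntegral.integral_of_le zero_le_one, integral_Ioc_eq_integral_Ioo, hsub,
      mellin]
    refine setIntegral_congr_fun measurableSet_Ioi fun t ht ↦ ?_
    have ht' : (0:ℝ) < t := ht
    have hexp : (0:ℝ) < Real.exp (-t) := Real.exp_pos _
    have hne : ((Real.exp (-t) : ℝ) : ℂ) ≠ 0 := by
      exact_mod_cast hexp.ne'
    rw [abs_neg, abs_of_pos hexp]
    simp only [hG_def, hF_def, Real.log_exp, neg_neg]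
    rw [Complex.real_smul, smul_eq_mul, show k + 1 - 1 = k by ring]
    field_simp
  rw [hstepA]
  -- Step B : apply hasSum_mellin
  set a : ℕ ⊕ ℕ → ℂ :=
    Sum.elim (fun j ↦ (-1) ^ j / ((j : ℂ) + 1)) (fun j ↦ -(1 / ((j : ℂ) + 1))) with ha_def
  set p : ℕ ⊕ ℕ → ℝ :=
    Sum.elim (fun j ↦ m * ((j : ℝ) + 1)) (fun j ↦ n * ((j : ℝ) + 1)) with hp_def
  have hσre : 0 < (k + 1).re := by
    simp only [Complex.add_re, Complex.one_re]
    linarith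
  have hp : ∀ i, a i = 0 ∨ 0 < p i := by
    intro i
    refine Or.inr ?_
    rcases i with j | j <;> simp only [hp_def, Sum.elim_inl, Sum.elim_inr] <;> positivity
  have hF : ∀ t ∈ Ioi (0:ℝ), HasSum (fun i ↦ a i * Real.exp (-p i * t)) (F t) := by
    intro t ht
    have ht' : (0:ℝ) < t := ht
    set x : ℝ := Real.exp (-t) with hx_def
    have hx0 : 0 < x := Real.exp_pos _
    have hx1 : x < 1 := Real.exp_lt_one_iff.mpr (by simpa using ht')
    have hym : ∀ c : ℝ, 0 < c → x ^ c = Real.exp (-(c * t)) := by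
      intro c hc
      rw [Real.rpow_def_of_pos hx0, hx_def, Real.log_exp]
      ring_nf
    have hpow : ∀ (c : ℝ) (j : ℕ), 0 < c →
        (x ^ c) ^ (j + 1) = Real.exp (-(c * ((j : ℝ) + 1)) * t) := by
      intro c j hc
      rw [hym c hc, ← Real.exp_nat_mul]
      congr 1
      push_cast
      ring
    have hxm1 : x ^ m < 1 := Real.rpow_lt_one hx0.le hx1 hm
    have hxn1 : x ^ n < 1 := Real.rpow_lt_one hx0.le hx1 hn
    have hxm0 : 0 < x ^ m := Real.rpow_pos_of_pos hx0 m
    have hxn0 : 0 < x ^ n := Real.rpow_pos_of_pos hx0 n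
    -- first factor
    have hz : ‖((x ^ m : ℝ) : ℂ)‖ < 1 := by
      rw [Complex.norm_real, Real.norm_eq_abs, abs_of_pos hxm0]; exact hxm1
    have H1 := Complex.hasSum_taylorSeries_log hz
    have H1' := (hasSum_nat_add_iff
      (f := fun N : ℕ ↦ (-1) ^ (N + 1) * ((x ^ m : ℝ) : ℂ) ^ N / N) 1).mpr
      (by simpa using H1)
    have h1 : HasSum (fun j : ℕ ↦ a (Sum.inl j) * Real.exp (-p (Sum.inl j) * t))
        (Complex.log (1 + ((x ^ m : ℝ) : ℂ))) := by
      refine H1'.congr_fun fun j ↦ ?_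
      simp only [ha_def, hp_def, Sum.elim_inl]
      rw [← Complex.ofReal_pow, hpow m j hm]
      push_cast
      rw [pow_succ, pow_succ]
      ring
    -- second factor
    have hw : ‖((x ^ n : ℝ) : ℂ)‖ < 1 := by
      rw [Complex.norm_real, Real.norm_eq_abs, abs_of_pos hxn0]; exact hxn1
    have H2 := (Complex.hasSum_taylorSeries_neg_log hw).neg
    have H2' := (hasSum_nat_add_iff
      (f := fun N : ℕ ↦ -(((x ^ n : ℝ) : ℂ) ^ N / N)) 1).mpr
      (by simpa using H2)
    have h2 : HasSum (fun j : ℕ ↦ a (Sum.inr j) * Real.exp (-p (Sum.inr j) * t))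
        (Complex.log (1 - ((x ^ n : ℝ) : ℂ))) := by
      refine H2'.congr_fun fun j ↦ ?_
      simp only [ha_def, hp_def, Sum.elim_inr]
      rw [← Complex.ofReal_pow, hpow n j hn]
      push_cast
      ring
    have hcomb := hasSum_sumtype (f := fun i ↦ a i * Real.exp (-p i * t)) h1 h2
    have hFt : F t = Complex.log (1 + ((x ^ m : ℝ) : ℂ)) + Complex.log (1 - ((x ^ n : ℝ) : ℂ)) := by
      simp only [hF_def]
      rw [Real.log_mul (by positivity) (by linarith), Complex.ofReal_add,
        Complex.ofReal_log (by positivity), Complex.ofReal_log (by linarith)]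
      push_cast
      rw [add_comm ((x ^ m : ℝ) : ℂ) 1]
    rw [hFt]
    exact hcomb
  have h_sum : Summable fun i ↦ ‖a i‖ / (p i) ^ (k + 1).re := by
    have hnorm : ∀ j : ℕ, ‖((j : ℂ) + 1)‖ = (j : ℝ) + 1 := by
      intro j
      have : ((j : ℂ) + 1) = (((j : ℝ) + 1 : ℝ) : ℂ) := by push_cast; rfl
      rw [this, Complex.norm_real, Real.norm_eq_abs, abs_of_pos (by positivity)]
    have hsl : Summable (fun j : ℕ ↦ ‖a (Sum.inl j)‖ / (p (Sum.inl j)) ^ (k + 1).re) := by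
      refine (sumAux hm hσre).congr fun j ↦ ?_
      simp only [ha_def, hp_def, Sum.elim_inl, norm_div, norm_pow, norm_neg, norm_one,
        one_pow, hnorm]
    have hsr : Summable (fun j : ℕ ↦ ‖a (Sum.inr j)‖ / (p (Sum.inr j)) ^ (k + 1).re) := by
      refine (sumAux hn hσre).congr fun j ↦ ?_
      simp only [ha_def, hp_def, Sum.elim_inr, norm_neg, norm_div, norm_one, hnorm]
    exact (hasSum_sumtype (f := fun i ↦ ‖a i‖ / (p i) ^ (k + 1).re) hsl.hasSum hsr.hasSum).summable
  have hmellin := hasSum_mellin hp hσre hF h_sum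
  -- Step C : identify the sum
  have hs2 : 1 < (k + 2).re := by
    simp only [Complex.add_re, Complex.re_ofNat]
    linarith
  have hGam := Complex.Gamma (k + 1)
  have hmC : (m : ℂ) ^ (k + 1) ≠ 0 := by
    intro h
    rw [Complex.cpow_eq_zero_iff] at h
    exact (Complex.ofReal_ne_zero.mpr hm.ne') h.1
  have hnC : (n : ℂ) ^ (k + 1) ≠ 0 := by
    intro h
    rw [Complex.cpow_eq_zero_iff] at h
    exact (Complex.ofReal_ne_zero.mpr hn.ne') h.1
  have hsplit : ∀ (c : ℝ), 0 < c → ∀ j : ℕ,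
      ((c * ((j : ℝ) + 1) : ℝ) : ℂ) ^ (k + 1) = (c : ℂ) ^ (k + 1) * ((j : ℂ) + 1) ^ (k + 1) := by
    intro c hc j
    rw [Complex.ofReal_mul, Complex.mul_cpow_ofReal_nonneg hc.le (by positivity)]
    congr 2
    push_cast
    rfl
  have hjC : ∀ j : ℕ, ((j : ℂ) + 1) ^ (k + 1) ≠ 0 := by
    intro j h
    rw [Complex.cpow_eq_zero_iff] at h
    exact natC_ne j h.1
  have hpowsplit : ∀ j : ℕ, ((j : ℂ) + 1) ^ (-(k + 2))
      = (((j : ℂ) + 1) ^ (k + 1))⁻¹ * ((j : ℂ) + 1)⁻¹ := by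
    intro j
    rw [show -(k + 2) = -(k + 1) + (-1) by ring,
      Complex.cpow_add _ _ (natC_ne j), Complex.cpow_neg, Complex.cpow_neg_one]
  have h1 : HasSum (fun j : ℕ ↦ Complex.Gamma (k + 1) * a (Sum.inl j) / ((p (Sum.inl j) : ℝ) : ℂ) ^ (k + 1))
      ((Complex.Gamma (k + 1) * ((m : ℂ) ^ (k + 1))⁻¹) *
        ((1 - 2 ^ (1 - (k + 2))) * riemannZeta (k + 2))) := by
    refine ((hasSum_eta hs2).mul_left (Complex.Gamma (k + 1) * ((m : ℂ) ^ (k + 1))⁻¹)).congr_fun fun j ↦ ?_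
    simp only [ha_def, hp_def, Sum.elim_inl]
    rw [hsplit m hm j, hpowsplit j]
    field_simp
  have h2 : HasSum (fun j : ℕ ↦ Complex.Gamma (k + 1) * a (Sum.inr j) / ((p (Sum.inr j) : ℝ) : ℂ) ^ (k + 1))
      ((-(Complex.Gamma (k + 1) * ((n : ℂ) ^ (k + 1))⁻¹)) * riemannZeta (k + 2)) := by
    refine ((hasSum_zeta_shift hs2).mul_left
      (-(Complex.Gamma (k + 1) * ((n : ℂ) ^ (k + 1))⁻¹))).congr_fun fun j ↦ ?_
    simp only [ha_def, hp_def, Sum.elim_inr]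
    rw [hsplit n hn j]
    have h21 : (1 : ℂ) / ((j : ℂ) + 1) ^ (k + 2)
        = (((j : ℂ) + 1) ^ (k + 1))⁻¹ * ((j : ℂ) + 1)⁻¹ := by
      rw [one_div, ← Complex.cpow_neg, hpowsplit j]
    rw [h21]
    field_simp
  have hval := hmellin.unique (hasSum_sumtype (f := fun i ↦ Complex.Gamma (k + 1) * a i / ((p i : ℝ) : ℂ) ^ (k + 1)) h1 h2)
  rw [hval]
  -- Step D : final algebra
  have e1 : (1 - (k + 2) : ℂ) = -k - 1 := by ring
  have e2 : (2 : ℂ) ^ (-k - 1 : ℂ) = (2 : ℂ) ^ (-k) / 2 := by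
    rw [Complex.cpow_sub _ _ two_ne_zero, Complex.cpow_one]
  have e3 : ((m : ℂ) ^ (k + 1))⁻¹ = (m : ℂ) ^ (-k - 1) := by
    rw [← Complex.cpow_neg, show -(k + 1) = -k - 1 by ring]
  have e4 : ((n : ℂ) ^ (k + 1))⁻¹ = (n : ℂ) ^ (-k - 1) := by
    rw [← Complex.cpow_neg, show -(k + 1) = -k - 1 by ring]
  rw [e1, e2, e3, e4]
  ring
end

section
/- For all real numbers n > -1 and p > -1 and every complex number k with Re(k) > -1, the integral over x from 0 to 1 of (-log x)^(k+1) * (x^n - x^p) / ((x^(n+1) - 1)(x^(p+1) - 1)) dx (where (-log x)^(k+1) is the principal-branch complex power of the positive real -log x) equals ζ(k+2) * Γ(k+2) * ((n+1)^(-k-2) - (p+1)^(-k-2)). -/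
open MeasureTheory Set Real Complex

private lemma myHasSum_sum_elim {M : Type*} [AddCommMonoid M] [TopologicalSpace M]
    [ContinuousAdd M] {α β : Type*} {f : α → M} {g : β → M} {a b : M}
    (hf : HasSum f a) (hg : HasSum g b) : HasSum (Sum.elim f g) (a + b) := by
  refine HasSum.add_isCompl Set.isCompl_range_inl_range_inr ?_ ?_
  · exact (Equiv.ofInjective (Sum.inl : α → α ⊕ β) Sum.inl_injective).hasSum_iff.mp hf
  · exact (Equiv.ofInjective (Sum.inr : β → α ⊕ β) Sum.inr_injective).hasSum_iff.mp hg

private lemma geom_aux {a t : ℝ} (ha : 0 < a) (ht : 0 < t) :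
    HasSum (fun m : ℕ => (if m = 0 then (0:ℂ) else 1) * (rexp (-(a * m) * t) : ℝ))
      (1 / (1 - (rexp (-(a * t)) : ℝ)) - 1) := by
  set r : ℂ := ((rexp (-(a * t)) : ℝ) : ℂ) with hr
  have hrn : ‖r‖ < 1 := by
    rw [hr, Complex.norm_real, Real.norm_eq_abs, abs_of_pos (Real.exp_pos _)]
    calc rexp (-(a * t)) < rexp 0 := Real.exp_lt_exp.mpr (by nlinarith)
    _ = 1 := Real.exp_zero
  have h := (hasSum_geometric_of_norm_lt_one hrn).sub (hasSum_ite_eq (0 : ℕ) (1 : ℂ))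
  rw [one_div]
  refine h.congr_fun fun m => ?_
  match m with
  | 0 => simp
  | (m + 1) =>
    simp only [Nat.succ_ne_zero, if_false, one_mul]
    rw [sub_zero, hr, ← Complex.ofReal_pow, ← Real.exp_nat_mul]
    norm_num
    congr 2
    push_cast
    ring

theorem integral_neg_log_cpow_mul_rpow_sub_div_sub_one (n p : ℝ)
    (hn : -1 < n) (hp : -1 < p) (k : ℂ) (hk : -1 < k.re) :
    ∫ x in (0:ℝ)..1,
        ((-Real.log x : ℝ) : ℂ) ^ (k + 1) * ((x ^ n : ℝ) - (x ^ p : ℝ) : ℂ) /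
          ((((x ^ (n + 1) : ℝ) : ℂ) - 1) * (((x ^ (p + 1) : ℝ) : ℂ) - 1)) =
      riemannZeta (k + 2) * Complex.Gamma (k + 2) *
        (((n + 1 : ℝ) : ℂ) ^ (-k - 2) - ((p + 1 : ℝ) : ℂ) ^ (-k - 2)) := by
  have ha : (0:ℝ) < n + 1 := by linarith
  have hb : (0:ℝ) < p + 1 := by linarith
  set s : ℂ := k + 2 with hs_def
  have hs : 1 < s.re := by
    simp only [hs_def, Complex.add_re, Complex.re_ofNat]; linarith
  have hs0 : 0 < s.re := by linarith
  set c : ℕ ⊕ ℕ → ℂ :=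
    Sum.elim (fun m => if m = 0 then 0 else 1) (fun m => if m = 0 then 0 else -1) with hc
  set q : ℕ ⊕ ℕ → ℝ :=
    Sum.elim (fun m => (n + 1) * m) (fun m => (p + 1) * m) with hq
  set F : ℝ → ℂ := fun t =>
    ((rexp (-t) : ℝ) : ℂ) * (((rexp (-t) ^ n : ℝ) : ℂ) - ((rexp (-t) ^ p : ℝ) : ℂ)) /
      ((((rexp (-t) ^ (n + 1) : ℝ) : ℂ) - 1) * (((rexp (-t) ^ (p + 1) : ℝ) : ℂ) - 1)) with hF_def
  -- pointwise identity of F with difference of geometric sums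
  have hFval : ∀ t : ℝ, 0 < t →
      F t = (1 / (1 - (rexp (-((n + 1) * t)) : ℝ)) - 1) +
        -((1 / (1 - (rexp (-((p + 1) * t)) : ℝ)) - 1) : ℂ) := by
    intro t ht
    set x : ℝ := rexp (-t) with hx
    have hx0 : 0 < x := Real.exp_pos _
    have hx1 : x < 1 := by
      calc x < rexp 0 := Real.exp_lt_exp.mpr (by linarith)
      _ = 1 := Real.exp_zero
    have hxa : x ^ (n + 1) = rexp (-((n + 1) * t)) := by
      rw [hx, ← Real.exp_log (Real.rpow_pos_of_pos hx0 (n+1)), Real.log_rpow hx0, Real.log_exp]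
      ring_nf
    have hxb : x ^ (p + 1) = rexp (-((p + 1) * t)) := by
      rw [hx, ← Real.exp_log (Real.rpow_pos_of_pos hx0 (p+1)), Real.log_rpow hx0, Real.log_exp]
      ring_nf
    have hxa1 : x ^ (n + 1) < 1 := Real.rpow_lt_one hx0.le hx1 ha
    have hxb1 : x ^ (p + 1) < 1 := Real.rpow_lt_one hx0.le hx1 hb
    have hA : ((x ^ (n + 1) : ℝ) : ℂ) - 1 ≠ 0 := by
      rw [sub_ne_zero]
      exact_mod_cast hxa1.ne
    have hB : ((x ^ (p + 1) : ℝ) : ℂ) - 1 ≠ 0 := by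
      rw [sub_ne_zero]
      exact_mod_cast hxb1.ne
    have hA' : (1 : ℂ) - ((x ^ (n + 1) : ℝ) : ℂ) ≠ 0 := by
      rw [sub_ne_zero]; exact_mod_cast hxa1.ne'
    have hB' : (1 : ℂ) - ((x ^ (p + 1) : ℝ) : ℂ) ≠ 0 := by
      rw [sub_ne_zero]; exact_mod_cast hxb1.ne'
    have hmulA : ((x : ℝ) : ℂ) * ((x ^ n : ℝ) : ℂ) = ((x ^ (n + 1) : ℝ) : ℂ) := by
      rw [← Complex.ofReal_mul]
      congr 1
      rw [Real.rpow_add hx0, Real.rpow_one]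
      ring
    have hmulB : ((x : ℝ) : ℂ) * ((x ^ p : ℝ) : ℂ) = ((x ^ (p + 1) : ℝ) : ℂ) := by
      rw [← Complex.ofReal_mul]
      congr 1
      rw [Real.rpow_add hx0, Real.rpow_one]
      ring
    rw [hF_def]
    simp only [← hx, ← hxa, ← hxb]
    field_simp
    linear_combination (((x ^ (n+1) : ℝ) : ℂ) - 1) * (((x ^ (p+1) : ℝ) : ℂ) - 1) * hmulA -
      (((x ^ (n+1) : ℝ) : ℂ) - 1) * (((x ^ (p+1) : ℝ) : ℂ) - 1) * hmulB
  -- hypotheses of hasSum_mellin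
  have hcq : ∀ i, c i = 0 ∨ 0 < q i := by
    rintro (m | m) <;> rcases Nat.eq_zero_or_pos m with h | h
    · left; simp [hc, h]
    · right
      simp only [hq, Sum.elim_inl]
      exact mul_pos ha (by exact_mod_cast h)
    · left; simp [hc, h]
    · right
      simp only [hq, Sum.elim_inr]
      exact mul_pos hb (by exact_mod_cast h)
  have hF : ∀ t ∈ Ioi (0:ℝ), HasSum (fun i => c i * (rexp (-q i * t) : ℝ)) (F t) := by
    intro t ht
    rw [hFval t ht]
    have h1 := geom_aux ha ht
    have h2 := (geom_aux hb ht).neg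
    have := myHasSum_sum_elim h1 h2
    refine this.congr_fun ?_
    rintro (m | m) <;> simp [hc, hq, ite_mul, neg_mul] <;> split_ifs <;> simp
  have base : Summable fun m : ℕ => (((m : ℝ) ^ s.re)⁻¹) :=
    Real.summable_nat_rpow_inv.mpr hs
  have branch : ∀ a : ℝ, 0 < a → ∀ u : ℂ,
      Summable (fun m : ℕ => ‖if m = 0 then (0:ℂ) else u‖ / (a * m) ^ s.re) := by
    intro a ha' u
    refine Summable.of_nonneg_of_le
      (fun m => div_nonneg (norm_nonneg _) (Real.rpow_nonneg (by positivity) _)) (fun m => ?_)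
      (base.mul_left ((a ^ s.re)⁻¹ * ‖u‖))
    rcases Nat.eq_zero_or_pos m with h | h
    · simp only [h, if_pos rfl, norm_zero, zero_div]
      have : ((0:ℕ) : ℝ) ^ s.re = 0 := by
        rw [Nat.cast_zero, Real.zero_rpow hs0.ne']
      rw [this]
      simp
    · rw [if_neg h.ne', Real.mul_rpow ha'.le (Nat.cast_nonneg m), div_eq_mul_inv, mul_inv]
      rw [mul_assoc, mul_comm ‖u‖]
      exact le_of_eq (by ring)
  have h_sum : Summable fun i => ‖c i‖ / q i ^ s.re := by
    have h1 := (branch (n + 1) ha 1).hasSum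
    have h2 := (branch (p + 1) hb (-1)).hasSum
    have := (myHasSum_sum_elim h1 h2).summable
    refine this.congr ?_
    rintro (m | m) <;> simp [hc, hq]
  have hmel := hasSum_mellin hcq hs0 hF h_sum
  -- the value of the sum
  have hz : HasSum (fun m : ℕ => 1 / (m : ℂ) ^ s) (riemannZeta s) := by
    have := (Complex.summable_one_div_nat_cpow.mpr hs).hasSum
    rwa [← zeta_eq_tsum_one_div_nat_cpow hs] at this
  have hsne : s ≠ 0 := by
    intro h
    rw [h, Complex.zero_re] at hs
    norm_num at hs
  have branch2 : ∀ a : ℝ, 0 < a → ∀ u : ℂ,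
      HasSum (fun m : ℕ => Complex.Gamma s * (if m = 0 then (0:ℂ) else u) / ((a * m : ℝ) : ℂ) ^ s)
        (Complex.Gamma s * u * ((a : ℝ) : ℂ) ^ (-s) * riemannZeta s) := by
    intro a ha' u
    have := hz.mul_left (Complex.Gamma s * u * ((a : ℝ) : ℂ) ^ (-s))
    refine this.congr_fun fun m => ?_
    rcases Nat.eq_zero_or_pos m with h | h
    · simp [h, Complex.zero_cpow hsne]
    · rw [if_neg h.ne', Complex.ofReal_mul,
        Complex.mul_cpow_ofReal_nonneg ha'.le (Nat.cast_nonneg m), Complex.cpow_neg]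
      have hm : ((m : ℝ) : ℂ) = (m : ℂ) := by push_cast; rfl
      rw [hm]
      have hane : ((a : ℝ) : ℂ) ^ s ≠ 0 := by
        rw [Ne, Complex.cpow_eq_zero_iff, not_and_or]
        exact Or.inl (Complex.ofReal_ne_zero.mpr ha'.ne')
      field_simp
  -- sum value
  have h1 := branch2 (n + 1) ha 1
  have h2 := branch2 (p + 1) hb (-1)
  have hcomb := myHasSum_sum_elim h1 h2
  have hval : mellin F s =
      Complex.Gamma s * 1 * ((n + 1 : ℝ) : ℂ) ^ (-s) * riemannZeta s +
        Complex.Gamma s * (-1) * ((p + 1 : ℝ) : ℂ) ^ (-s) * riemannZeta s := by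
    refine hmel.unique (hcomb.congr_fun ?_)
    rintro (m | m) <;> simp [hc, hq]
  -- change of variables
  have himg : Ioo (0:ℝ) 1 = (fun t => rexp (-t)) '' Ioi 0 := by
    ext x
    constructor
    · rintro ⟨hx0, hx1⟩
      refine ⟨-Real.log x, ?_, ?_⟩
      · simpa using Real.log_neg hx0 hx1
      · simp [Real.exp_log hx0]
    · rintro ⟨t, ht, rfl⟩
      refine ⟨Real.exp_pos _, ?_⟩
      calc rexp (-t) < rexp 0 := Real.exp_lt_exp.mpr (by simpa using ht)
      _ = 1 := Real.exp_zero
  have hderiv : ∀ t ∈ Ioi (0:ℝ),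
      HasDerivWithinAt (fun t => rexp (-t)) (-rexp (-t)) (Ioi 0) t := by
    intro t _
    have h := (Real.hasDerivAt_exp (-t)).comp t (hasDerivAt_neg t)
    have h2 := (hasDerivAt_neg t).exp
    rw [mul_neg_one] at h2
    exact h2.hasDerivWithinAt
  have hinj : InjOn (fun t => rexp (-t)) (Ioi 0) :=
    fun x _ y _ h => neg_injective (Real.exp_injective h)
  have hmel_eq : (∫ x in (0:ℝ)..1,
      ((-Real.log x : ℝ) : ℂ) ^ (k + 1) * ((x ^ n : ℝ) - (x ^ p : ℝ) : ℂ) /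
        ((((x ^ (n + 1) : ℝ) : ℂ) - 1) * (((x ^ (p + 1) : ℝ) : ℂ) - 1))) = mellin F s := by
    rw [intervalIntegral.integral_of_le zero_le_one,
      MeasureTheory.integral_Ioc_eq_integral_Ioo, himg,
      MeasureTheory.integral_image_eq_integral_abs_deriv_smul measurableSet_Ioi hderiv hinj,
      show mellin F s = ∫ t in Ioi (0:ℝ), (t : ℂ) ^ (s - 1) • F t from rfl]
    refine setIntegral_congr_fun measurableSet_Ioi fun t ht => ?_
    rw [abs_neg, abs_of_pos (Real.exp_pos _), Real.log_exp, neg_neg, real_smul, hF_def,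
      smul_eq_mul, show s - 1 = k + 1 by rw [hs_def]; ring]
    ring
  rw [hmel_eq, hval, show -k - 2 = -s by rw [hs_def]; ring, hs_def]
  ring
end

section
/- For all real numbers m > -1 and p > -1, the integral over x from 0 to 1 of (x^m - x^p) / ((x^(m+1) + 1)(x^(p+1) + 1) * log x) dx equals (1/2) * log((m+1)/(p+1)). -/
open MeasureTheory Set intervalIntegral

section helpers

/-- Slice identity: for `x ∈ (0,1)` the integrand is an integral in `c`. -/
lemma slice_eq_aux {a b x : ℝ} (hx : x ∈ Ioo (0:ℝ) 1) :
    (x ^ (a-1) - x ^ (b-1)) / ((x ^ a + 1) * (x ^ b + 1) * Real.log x) =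
      ∫ c in b..a, x ^ (c-1) / (x ^ c + 1) ^ 2 := by
  have hx0 : (0:ℝ) < x := hx.1
  have hlog : Real.log x < 0 := Real.log_neg hx0 hx.2
  have hlogne : Real.log x ≠ 0 := hlog.ne
  have hne : ∀ c : ℝ, x ^ c + 1 ≠ 0 := fun c => by
    have := Real.rpow_nonneg hx0.le c; positivity
  have hderiv : ∀ c ∈ uIcc b a, HasDerivAt
      (fun c : ℝ => (-1 / (x * Real.log x)) * (x ^ c + 1)⁻¹)
      (x ^ (c-1) / (x ^ c + 1) ^ 2) c := by
    intro c _
    have h1 : HasDerivAt (fun c : ℝ => x ^ c + 1) (x ^ c * Real.log x) c :=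
      ((Real.hasStrictDerivAt_const_rpow hx0 c).hasDerivAt).add_const 1
    have h2 := (h1.inv (hne c)).const_mul (-1 / (x * Real.log x))
    refine h2.congr_deriv ?_
    rw [Real.rpow_sub_one hx0.ne']
    field_simp
  have hint : IntervalIntegrable (fun c : ℝ => x ^ (c-1) / (x ^ c + 1) ^ 2) volume b a := by
    apply Continuous.intervalIntegrable
    have hc : Continuous fun c : ℝ => x ^ c :=
      continuous_iff_continuousAt.2 fun c => Real.continuousAt_const_rpow hx0.ne'
    exact ((hc.comp (continuous_id.sub continuous_const)).div
      ((hc.add continuous_const).pow 2) fun c => pow_ne_zero 2 (hne c))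
  rw [intervalIntegral.integral_eq_sub_of_hasDerivAt hderiv hint]
  rw [Real.rpow_sub_one hx0.ne', Real.rpow_sub_one hx0.ne']
  field_simp
  ring

/-- Inner integral in `x`. -/
lemma inner_x_aux {c : ℝ} (hc : 0 < c) :
    ∫ x in (0:ℝ)..1, x ^ (c - 1) / (x ^ c + 1) ^ 2 = 1 / (2 * c) := by
  have hne : ∀ x : ℝ, x ∈ Icc (0:ℝ) 1 → x ^ c + 1 ≠ 0 := fun x hx => by
    have := Real.rpow_nonneg hx.1 c; positivity
  have hcont : ContinuousOn (fun x : ℝ => -(1/c) * (x ^ c + 1)⁻¹) (Icc 0 1) := by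
    have h1 : ContinuousOn (fun x : ℝ => x ^ c) (Icc 0 1) := fun x _ =>
      (Real.continuousAt_rpow_const x c (Or.inr hc.le)).continuousWithinAt
    exact continuousOn_const.mul ((h1.add continuousOn_const).inv₀ hne)
  have hderiv : ∀ x ∈ Ioo (0:ℝ) 1, HasDerivWithinAt (fun x : ℝ => -(1/c) * (x ^ c + 1)⁻¹)
      (x ^ (c - 1) / (x ^ c + 1) ^ 2) (Ioi x) x := by
    intro x hx
    have hx0 : (0:ℝ) < x := hx.1
    have h1 : HasDerivAt (fun x : ℝ => x ^ c + 1) (c * x ^ (c - 1)) x :=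
      (Real.hasDerivAt_rpow_const (Or.inl hx0.ne')).add_const 1
    have hne' : x ^ c + 1 ≠ 0 := hne x ⟨hx0.le, hx.2.le⟩
    have h2 := (h1.inv hne').const_mul (-(1/c))
    refine h2.hasDerivWithinAt.congr_deriv ?_
    field_simp
  have hint : IntervalIntegrable (fun x : ℝ => x ^ (c - 1) / (x ^ c + 1) ^ 2) volume 0 1 := by
    have hbase : IntervalIntegrable (fun x : ℝ => x ^ (c - 1)) volume 0 1 :=
      intervalIntegrable_rpow' (by linarith)
    refine hbase.mono_fun ?_ ?_
    · apply ContinuousOn.aestronglyMeasurable ?_ measurableSet_uIoc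
      intro x hx
      rw [uIoc_of_le zero_le_one] at hx
      have hx0 : (0:ℝ) < x := hx.1
      have := hne x ⟨hx0.le, hx.2⟩
      exact (((Real.continuousAt_rpow_const x (c-1) (Or.inl hx0.ne')).div
        (((Real.continuousAt_rpow_const x c (Or.inl hx0.ne')).add continuousAt_const).pow 2)
        (pow_ne_zero 2 this)).continuousWithinAt)
    · refine (ae_restrict_iff' measurableSet_uIoc).2 (Filter.Eventually.of_forall ?_)
      intro x hx
      rw [uIoc_of_le zero_le_one] at hx
      have hx0 : (0:ℝ) < x := hx.1
      have h1 : (0:ℝ) ≤ x ^ (c-1) := Real.rpow_nonneg hx0.le _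
      have h2 : (1:ℝ) ≤ (x ^ c + 1) ^ 2 := by
        have := Real.rpow_nonneg hx0.le c; nlinarith
      simp only [Real.norm_eq_abs]
      rw [abs_of_nonneg (div_nonneg h1 (by positivity)), abs_of_nonneg h1,
        div_le_iff₀ (by positivity : (0:ℝ) < (x ^ c + 1) ^ 2)]
      nlinarith
  have h := intervalIntegral.integral_eq_sub_of_hasDeriv_right_of_le zero_le_one hcont hderiv hint
  rw [h, Real.one_rpow, Real.zero_rpow hc.ne']
  field_simp
  ring

/-- Fubini for the two-variable kernel. -/
lemma fubini_aux {a b : ℝ} (hb : 0 < b) (hba : b ≤ a) :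
    ∫ x in Ioc (0:ℝ) 1, (∫ c in Ioc b a, x ^ (c-1) / (x ^ c + 1) ^ 2) =
      ∫ c in Ioc b a, ∫ x in Ioc (0:ℝ) 1, x ^ (c-1) / (x ^ c + 1) ^ 2 := by
  have hb1 : (0:ℝ) < b := hb
  set f : ℝ → ℝ → ℝ := fun x c => x ^ (c-1) / (x ^ c + 1) ^ 2 with hf
  have hmeas : AEStronglyMeasurable (Function.uncurry f)
      ((volume.restrict (Ioc (0:ℝ) 1)).prod (volume.restrict (Ioc b a))) := by
    rw [Measure.prod_restrict]
    apply ContinuousOn.aestronglyMeasurable ?_ (measurableSet_Ioc.prod measurableSet_Ioc)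
    intro p hp
    have hx0 : (0:ℝ) < p.1 := hp.1.1
    have hden : p.1 ^ p.2 + 1 ≠ 0 := by
      have := Real.rpow_nonneg hx0.le p.2; positivity
    exact ((continuousAt_fst.rpow (continuousAt_snd.sub continuousAt_const)
      (Or.inl hx0.ne')).div
      (((continuousAt_fst.rpow continuousAt_snd (Or.inl hx0.ne')).add
        continuousAt_const).pow 2) (pow_ne_zero 2 hden)).continuousWithinAt
  have hsec : ∀ x ∈ Ioc (0:ℝ) 1, Integrable (fun c => f x c) (volume.restrict (Ioc b a)) := by
    intro x hx
    have hx0 : (0:ℝ) < x := hx.1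
    have hc : Continuous fun c : ℝ => x ^ c :=
      continuous_iff_continuousAt.2 fun c => Real.continuousAt_const_rpow hx0.ne'
    have hne : ∀ c : ℝ, (x ^ c + 1) ^ 2 ≠ 0 := fun c => by
      have := Real.rpow_nonneg hx0.le c; positivity
    exact (((hc.comp (continuous_id.sub continuous_const)).div
      ((hc.add continuous_const).pow 2) hne)).integrableOn_Ioc
  have hIoc : (volume (Ioc b a)).toReal = a - b := by
    rw [Real.volume_Ioc, ENNReal.toReal_ofReal (by linarith)]
  refine integral_integral_swap ?_
  rw [integrable_prod_iff hmeas]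
  constructor
  · refine (ae_restrict_iff' measurableSet_Ioc).2 (Filter.Eventually.of_forall hsec)
  · refine Integrable.mono' (g := fun x : ℝ => (a - b) * x ^ (b-1)) ?_ ?_ ?_
    · have hbase : IntervalIntegrable (fun x : ℝ => x ^ (b - 1)) volume 0 1 :=
        intervalIntegrable_rpow' (by linarith)
      have : IntegrableOn (fun x : ℝ => x ^ (b-1)) (Ioc 0 1) volume := by
        have := hbase.def'
        rwa [uIoc_of_le zero_le_one] at this
      exact this.const_mul (a - b)
    · exact hmeas.norm.integral_prod_right'
    · refine (ae_restrict_iff' measurableSet_Ioc).2 (Filter.Eventually.of_forall ?_)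
      intro x hx
      have hx0 : (0:ℝ) < x := hx.1
      have hnn : ∀ c : ℝ, 0 ≤ f x c := fun c => by
        have h1 := Real.rpow_nonneg hx0.le (c-1)
        have h2 := Real.rpow_nonneg hx0.le c
        positivity
      rw [Real.norm_eq_abs, abs_of_nonneg (integral_nonneg fun c => by
        simp [hnn c])]
      have hle : ∀ c ∈ Ioc b a, ‖f x c‖ ≤ x ^ (b-1) := by
        intro c hc
        rw [Real.norm_eq_abs, abs_of_nonneg (hnn c)]
        have h1 : f x c ≤ x ^ (c-1) := by
          have h2 : (1:ℝ) ≤ (x ^ c + 1) ^ 2 := by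
            have := Real.rpow_nonneg hx0.le c; nlinarith
          rw [hf]
          calc x ^ (c-1) / (x ^ c + 1) ^ 2 ≤ x ^ (c-1) / 1 := by
                apply div_le_div_of_nonneg_left (Real.rpow_nonneg hx0.le _) one_pos h2
            _ = x ^ (c-1) := by rw [div_one]
        exact h1.trans (Real.rpow_le_rpow_of_exponent_ge hx0 hx.2 (by linarith [hc.1.le]))
      calc (∫ c in Ioc b a, ‖f x c‖) ≤ ∫ c in Ioc b a, x ^ (b-1) := by
            apply setIntegral_mono_on ((hsec x hx).norm) (integrableOn_const ?_)
              measurableSet_Ioc hle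
            rw [Real.volume_Ioc]; exact ENNReal.ofReal_ne_top
        _ = (a - b) * x ^ (b-1) := by rw [setIntegral_const, smul_eq_mul, measureReal_def, hIoc]

lemma main_aux {a b : ℝ} (hb : 0 < b) (hba : b ≤ a) :
    ∫ x in (0:ℝ)..1, (x ^ (a-1) - x ^ (b-1)) / ((x ^ a + 1) * (x ^ b + 1) * Real.log x) =
      1/2 * Real.log (a/b) := by
  have ha : 0 < a := lt_of_lt_of_le hb hba
  rw [intervalIntegral.integral_of_le zero_le_one]
  have h1 : ∀ᵐ x : ℝ ∂(volume.restrict (Ioc (0:ℝ) 1)), x ≠ 1 := by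
    refine (ae_restrict_iff' measurableSet_Ioc).2 ?_
    have : (volume ({(1:ℝ)} : Set ℝ)) = 0 := measure_singleton 1
    filter_upwards [measure_eq_zero_iff_ae_notMem.1 this] with x hx
    intro _; simpa using hx
  have hcongr : ∀ᵐ x ∂(volume.restrict (Ioc (0:ℝ) 1)),
      (x ^ (a-1) - x ^ (b-1)) / ((x ^ a + 1) * (x ^ b + 1) * Real.log x) =
        ∫ c in Ioc b a, x ^ (c-1) / (x ^ c + 1) ^ 2 := by
    filter_upwards [h1, ae_restrict_mem measurableSet_Ioc] with x hx1 hxm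
    rw [← intervalIntegral.integral_of_le hba]
    exact slice_eq_aux ⟨hxm.1, lt_of_le_of_ne hxm.2 hx1⟩
  rw [integral_congr_ae hcongr, fubini_aux hb hba]
  have hval : ∀ c ∈ Ioc b a, (∫ x in Ioc (0:ℝ) 1, x ^ (c-1) / (x ^ c + 1) ^ 2) = 1 / (2*c) := by
    intro c hc
    rw [← intervalIntegral.integral_of_le zero_le_one]
    exact inner_x_aux (hb.trans hc.1)
  rw [setIntegral_congr_fun measurableSet_Ioc hval, ← intervalIntegral.integral_of_le hba]
  have : ∀ c : ℝ, 1 / (2*c) = (1/2) * (1/c) := fun c => by ring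
  simp_rw [this]
  rw [intervalIntegral.integral_const_mul, integral_one_div]
  intro h
  rw [uIcc_of_le hba] at h
  linarith [h.1]

end helpers

theorem integral_rpow_sub_div_add_one_mul_log (m p : ℝ) (hm : -1 < m) (hp : -1 < p) :
    ∫ x in (0:ℝ)..1,
        (x ^ m - x ^ p) / ((x ^ (m + 1) + 1) * (x ^ (p + 1) + 1) * Real.log x) =
      (1 / 2) * Real.log ((m + 1) / (p + 1)) := by
  have hm1 : (0:ℝ) < m + 1 := by linarith
  have hp1 : (0:ℝ) < p + 1 := by linarith
  rcases le_total p m with h | h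
  · have := main_aux (a := m + 1) (b := p + 1) hp1 (by linarith)
    simpa [add_sub_cancel_right] using this
  · have := main_aux (a := p + 1) (b := m + 1) hm1 (by linarith)
    simp only [add_sub_cancel_right] at this
    have hsign : ∀ x : ℝ,
        (x ^ m - x ^ p) / ((x ^ (m + 1) + 1) * (x ^ (p + 1) + 1) * Real.log x) =
        -((x ^ p - x ^ m) / ((x ^ (p + 1) + 1) * (x ^ (m + 1) + 1) * Real.log x)) := by
      intro x
      rw [← neg_div, neg_sub, mul_comm (x ^ (p+1) + 1)]
    have heq : (∫ x in (0:ℝ)..1,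
        (x ^ m - x ^ p) / ((x ^ (m + 1) + 1) * (x ^ (p + 1) + 1) * Real.log x)) =
        -∫ x in (0:ℝ)..1, (x ^ p - x ^ m) / ((x ^ (p + 1) + 1) * (x ^ (m + 1) + 1) * Real.log x) := by
      rw [← intervalIntegral.integral_neg]
      exact intervalIntegral.integral_congr fun x _ => hsign x
    rw [heq, this, Real.log_div hp1.ne' hm1.ne', Real.log_div hm1.ne' hp1.ne']
    ring
end

section
/- For all real numbers n > -1 and p > -1, the integral over x from 0 to 1 of (log x)^2 * (x^n - x^p) / ((x^(n+1) - 1)(x^(p+1) - 1)) dx equals 2 * ζ(3) * (1/(n+1)^3 - 1/(p+1)^3). -/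
set_option maxHeartbeats 1000000
open MeasureTheory Real Set Filter Topology intervalIntegral

noncomputable def Faux (c : ℝ) (x : ℝ) : ℝ :=
  x ^ c * ((Real.log x)^2/c - 2*Real.log x/c^2 + 2/c^3)

lemma hasDerivAt_Faux {c : ℝ} (hc : c ≠ 0) {x : ℝ} (hx : 0 < x) :
    HasDerivAt (Faux c) (x ^ (c-1) * (Real.log x)^2) x := by
  have h1 : HasDerivAt (fun x : ℝ => x ^ c) (c * x ^ (c-1)) x :=
    Real.hasDerivAt_rpow_const (Or.inl hx.ne')
  have hl : HasDerivAt Real.log x⁻¹ x := Real.hasDerivAt_log hx.ne'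
  have h2 : HasDerivAt (fun x => (Real.log x)^2/c - 2*Real.log x/c^2 + 2/c^3)
      ((2 * Real.log x ^ 1 * x⁻¹)/c - 2*x⁻¹/c^2) x := by
    exact (((hl.pow 2).div_const c).sub ((hl.const_mul 2).div_const (c^2))).add_const _
  have h3 := h1.mul h2
  have hxc : x ^ c * x⁻¹ = x ^ (c - 1) := by
    rw [Real.rpow_sub hx, Real.rpow_one, div_eq_mul_inv]
  refine h3.congr_deriv (Eq.symm ?_)
  have h4 : x ^ c = x ^ (c-1) * x := by
    rw [← hxc, mul_assoc, inv_mul_cancel₀ hx.ne', mul_one]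
  rw [pow_one]
  field_simp
  ring_nf
  rw [h4]
  ring_nf

lemma tendsto_Faux {c : ℝ} (hc : 0 < c) : Tendsto (Faux c) (𝓝[>] (0:ℝ)) (𝓝 0) := by
  have half : (0:ℝ) < c/2 := by linarith
  have h1 : Tendsto (fun x : ℝ => Real.log x * x ^ (c/2)) (𝓝[>] (0:ℝ)) (𝓝 0) :=
    tendsto_log_mul_rpow_nhdsGT_zero half
  have hsq : Tendsto (fun x : ℝ => x ^ c * (Real.log x)^2) (𝓝[>] (0:ℝ)) (𝓝 0) := by
    have := h1.mul h1
    rw [mul_zero] at this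
    refine this.congr' ?_
    filter_upwards [self_mem_nhdsWithin] with x hx
    have hx : (0:ℝ) < x := hx
    rw [show Real.log x * x ^ (c/2) * (Real.log x * x ^ (c/2))
        = x ^ (c/2) * x ^ (c/2) * (Real.log x)^2 by ring, ← Real.rpow_add hx]
    norm_num
  have hlin : Tendsto (fun x : ℝ => x ^ c * Real.log x) (𝓝[>] (0:ℝ)) (𝓝 0) := by
    have := tendsto_log_mul_rpow_nhdsGT_zero hc
    exact this.congr fun x => by ring
  have hpow : Tendsto (fun x : ℝ => x ^ c) (𝓝[>] (0:ℝ)) (𝓝 0) := by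
    have : ContinuousAt (fun x : ℝ => x ^ c) 0 :=
      Real.continuousAt_rpow_const 0 c (Or.inr hc.le)
    have h0 : (0:ℝ) ^ c = 0 := Real.zero_rpow hc.ne'
    simpa [h0] using this.continuousWithinAt.tendsto
  have := ((hsq.div_const c).sub ((hlin.div_const (c^2)).const_mul 2)).add
      ((hpow.div_const (c^3)).const_mul 2)
  norm_num at this
  refine this.congr fun x => ?_
  unfold Faux
  ring

lemma Faux_one {c : ℝ} : Faux c 1 = 2/c^3 := by simp [Faux]

lemma Faux_nonneg {c : ℝ} (hc : 0 < c) {x : ℝ} (h0 : 0 < x) (h1 : x ≤ 1) : 0 ≤ Faux c x := by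
  have hl : Real.log x ≤ 0 := Real.log_nonpos h0.le h1
  have hxc : 0 ≤ x ^ c := (Real.rpow_pos_of_pos h0 c).le
  apply mul_nonneg hxc
  have h1' : 0 ≤ -(2 * Real.log x) / c^2 :=
    div_nonneg (by linarith) (by positivity)
  have h2 : 0 ≤ (Real.log x)^2 / c := by positivity
  have h3 : 0 ≤ 2 / c^3 := by positivity
  have : -(2 * Real.log x) / c^2 = - (2 * Real.log x / c^2) := by ring
  rw [this] at h1'
  linarith

lemma contOn_pow_logsq {b ε : ℝ} (hε : 0 < ε) :
    ContinuousOn (fun x : ℝ => x ^ b * (Real.log x)^2) (Icc ε 1) := by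
  intro x hx
  have hx0 : 0 < x := lt_of_lt_of_le hε hx.1
  exact ((Real.continuousAt_rpow_const x b (Or.inl hx0.ne')).mul
    ((Real.continuousAt_log hx0.ne').pow 2)).continuousWithinAt

lemma ftc_Faux {b ε : ℝ} (hb : -1 < b) (hε : 0 < ε) (hε1 : ε ≤ 1) :
    ∫ x in ε..1, x ^ b * (Real.log x)^2 = Faux (b+1) 1 - Faux (b+1) ε := by
  have hc : b + 1 ≠ 0 := by linarith
  refine intervalIntegral.integral_eq_sub_of_hasDerivAt (fun x hx => ?_) ?_
  · rw [uIcc_of_le hε1] at hx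
    have hx0 : 0 < x := lt_of_lt_of_le hε hx.1
    have := hasDerivAt_Faux hc hx0
    simpa using this
  · refine (contOn_pow_logsq hε).mono ?_ |>.intervalIntegrable
    rw [uIcc_of_le hε1]

lemma integral_pow_logsq {b : ℝ} (hb : -1 < b) :
    IntegrableOn (fun x : ℝ => x ^ b * (Real.log x)^2) (Ioc 0 1) ∧
    ∫ x in Ioc (0:ℝ) 1, x ^ b * (Real.log x)^2 = 2/(b+1)^3 := by
  have hc : (0:ℝ) < b + 1 := by linarith
  set f : ℝ → ℝ := fun x => x ^ b * (Real.log x)^2 with hf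
  set a : ℕ → ℝ := fun k => (2:ℝ)⁻¹ ^ (k+1) with ha
  have hapos : ∀ k, 0 < a k := fun k => by positivity
  have hale : ∀ k, a k ≤ 1 := fun k => by
    calc a k ≤ (2:ℝ)⁻¹ ^ 0 := pow_le_pow_of_le_one (by norm_num) (by norm_num) (Nat.zero_le _)
    _ = 1 := by norm_num
  have hatend : Tendsto a atTop (𝓝 0) := by
    have : Tendsto (fun k : ℕ => (2:ℝ)⁻¹ ^ k) atTop (𝓝 0) :=
      tendsto_pow_atTop_nhds_zero_of_lt_one (by norm_num) (by norm_num)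
    exact this.comp (tendsto_add_atTop_nat 1)
  have hfi : ∀ k, IntegrableOn f (Ioc (a k) 1) := fun k =>
    ((contOn_pow_logsq (hapos k)).integrableOn_Icc).mono_set Ioc_subset_Icc_self
  have hnonneg : ∀ x ∈ Ioc (0:ℝ) 1, 0 ≤ f x := fun x hx =>
    mul_nonneg (Real.rpow_pos_of_pos hx.1 b).le (sq_nonneg _)
  have hval : ∀ k, ∫ x in Ioc (a k) 1, f x = Faux (b+1) 1 - Faux (b+1) (a k) := fun k => by
    rw [← intervalIntegral.integral_of_le (hale k)]
    exact ftc_Faux hb (hapos k) (hale k)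
  have hnormval : ∀ k, ∫ x in Ioc (a k) 1, ‖f x‖ = Faux (b+1) 1 - Faux (b+1) (a k) := fun k => by
    rw [← hval k]
    refine setIntegral_congr_fun measurableSet_Ioc fun x hx => ?_
    exact Real.norm_of_nonneg (hnonneg x ⟨(hapos k).trans hx.1, hx.2⟩)
  have hbound : ∀ k, (∫ x in Ioc (a k) 1, ‖f x‖) ≤ Faux (b+1) 1 := fun k => by
    rw [hnormval k]
    have := Faux_nonneg hc (hapos k) (hale k)
    linarith
  have hint : IntegrableOn f (Ioc 0 1) :=
    integrableOn_Ioc_of_intervalIntegral_norm_bounded_left hfi hatend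
      (Eventually.of_forall hbound)
  refine ⟨hint, ?_⟩
  have hcover : AECover ((volume : Measure ℝ).restrict (Ioc 0 1)) atTop
      (fun k => Ioc (a k) 1) :=
    aecover_Ioc_of_Ioc hatend tendsto_const_nhds
  have htendI : Tendsto (fun k => ∫ x in Ioc (a k) 1, f x) atTop (𝓝 (Faux (b+1) 1)) := by
    simp_rw [hval]
    have := (tendsto_Faux hc).comp
      (tendsto_nhdsWithin_iff.mpr ⟨hatend, Eventually.of_forall fun k => hapos k⟩)
    simpa using tendsto_const_nhds.sub this
  have := hcover.integral_eq_of_tendsto (Faux (b+1) 1) hint ?_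
  · rw [this, Faux_one]
  · refine htendI.congr fun k => ?_
    rw [Measure.restrict_restrict measurableSet_Ioc,
      inter_eq_self_of_subset_left (Ioc_subset_Ioc_left (hapos k).le)]

lemma summable_inv_cube : Summable (fun k : ℕ => 1/((k:ℝ)+1)^3) := by
  have h := Real.summable_one_div_nat_pow.mpr (by norm_num : 1 < 3)
  have h2 := (summable_nat_add_iff 1).mpr h
  refine h2.congr fun k => ?_
  push_cast
  ring

lemma geom_sum_aux {c x : ℝ} (hc : 0 < c) (hx : x ∈ Ioo (0:ℝ) 1) :
    Summable (fun k : ℕ => x ^ (c*(k+1)-1) * (Real.log x)^2) ∧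
    ∑' k : ℕ, x ^ (c*(k+1)-1) * (Real.log x)^2
      = x ^ (c-1) * (Real.log x)^2 / (1 - x ^ c) := by
  have hx0 : (0:ℝ) < x := hx.1
  have hr0 : (0:ℝ) ≤ x ^ c := (Real.rpow_pos_of_pos hx0 c).le
  have hr1 : x ^ c < 1 := Real.rpow_lt_one hx0.le hx.2 hc
  have hterm : ∀ k : ℕ, x ^ (c*(k+1)-1) * (Real.log x)^2
      = (x ^ (c-1) * (Real.log x)^2) * (x ^ c) ^ k := fun k => by
    rw [show c*(k+1)-1 = (c-1) + c*(k:ℝ) by ring, Real.rpow_add hx0,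
      Real.rpow_mul hx0.le, Real.rpow_natCast]
    ring
  constructor
  · refine Summable.congr ?_ fun k => (hterm k).symm
    exact (summable_geometric_of_lt_one hr0 hr1).mul_left _
  · rw [tsum_congr hterm, tsum_mul_left, tsum_geometric_of_lt_one hr0 hr1, div_eq_mul_inv]

lemma integrand_eq {n p x : ℝ} (hn : -1 < n) (hp : -1 < p) (hx : x ∈ Ioo (0:ℝ) 1) :
    (Real.log x) ^ 2 * (x ^ n - x ^ p) / ((x ^ (n + 1) - 1) * (x ^ (p + 1) - 1))
      = x ^ n * (Real.log x)^2 / (1 - x ^ (n+1))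
        - x ^ p * (Real.log x)^2 / (1 - x ^ (p+1)) := by
  have hx0 : (0:ℝ) < x := hx.1
  have hU : x ^ (n+1) - 1 ≠ 0 :=
    ne_of_lt (sub_neg.mpr (Real.rpow_lt_one hx0.le hx.2 (by linarith)))
  have hV : x ^ (p+1) - 1 ≠ 0 :=
    ne_of_lt (sub_neg.mpr (Real.rpow_lt_one hx0.le hx.2 (by linarith)))
  have hU' : 1 - x ^ (n+1) ≠ 0 := fun h => hU (by linarith [sub_eq_zero.mp h])
  have hV' : 1 - x ^ (p+1) ≠ 0 := fun h => hV (by linarith [sub_eq_zero.mp h])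
  have key : x ^ n * x ^ (p+1) = x ^ p * x ^ (n+1) := by
    rw [← Real.rpow_add hx0, ← Real.rpow_add hx0]; ring_nf
  rw [div_sub_div _ _ hU' hV', div_eq_div_iff (mul_ne_zero hU hV) (mul_ne_zero hU' hV')]
  linear_combination ((Real.log x)^2 * ((x^(n+1)-1) * (x^(p+1)-1))) * key

noncomputable def gAux (c : ℝ) (k : ℕ) (x : ℝ) : ℝ := x ^ (c*((k:ℝ)+1)-1) * (Real.log x)^2

noncomputable def FAux (a b : ℝ) (k : ℕ) (x : ℝ) : ℝ := gAux a k x - gAux b k x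

theorem integral_log_sq_mul_rpow_sub_div_sub_one (n p : ℝ) (hn : -1 < n) (hp : -1 < p) :
    ((∫ x in (0:ℝ)..1,
        (Real.log x) ^ 2 * (x ^ n - x ^ p) /
          ((x ^ (n + 1) - 1) * (x ^ (p + 1) - 1)) : ℝ) : ℂ) =
      2 * riemannZeta 3 * (1 / ((n : ℂ) + 1) ^ 3 - 1 / ((p : ℂ) + 1) ^ 3) := by
  have ha : (0:ℝ) < n + 1 := by linarith
  have hb : (0:ℝ) < p + 1 := by linarith
  set Z : ℝ := ∑' k : ℕ, 1/((k:ℝ)+1)^3 with hZ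
  have hexp : ∀ c : ℝ, 0 < c → ∀ k : ℕ, (-1:ℝ) < c*((k:ℝ)+1)-1 := by
    intro c hc k
    have h1 : (1:ℝ) ≤ (k:ℝ)+1 := le_add_of_nonneg_left k.cast_nonneg
    nlinarith
  have hI : ∀ c : ℝ, (hc : 0 < c) → ∀ k : ℕ, IntegrableOn (gAux c k) (Ioo 0 1) := fun c hc k =>
    ((integral_pow_logsq (hexp _ hc k)).1).mono_set Ioo_subset_Ioc_self
  have hval : ∀ c : ℝ, (hc : 0 < c) → ∀ k : ℕ,
      ∫ x in Ioo (0:ℝ) 1, gAux c k x = 2/(c*((k:ℝ)+1))^3 := by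
    intro c hc k
    have : ∫ x in Ioo (0:ℝ) 1, gAux c k x
        = ∫ x in Ioc (0:ℝ) 1, x ^ (c*((k:ℝ)+1)-1) * (Real.log x)^2 :=
      (integral_Ioc_eq_integral_Ioo).symm
    rw [this, (integral_pow_logsq (hexp _ hc k)).2,
      show (c*((k:ℝ)+1)-1)+1 = c*((k:ℝ)+1) by ring]
  have hterm_eq : ∀ c : ℝ, 0 < c → ∀ k : ℕ,
      2/(c*((k:ℝ)+1))^3 = (2/c^3) * (1/((k:ℝ)+1)^3) := by
    intro c hc k
    have hk : ((k:ℝ)+1) ≠ 0 := by positivity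
    field_simp
  have hsum_c : ∀ c : ℝ, 0 < c → Summable (fun k : ℕ => 2/(c*((k:ℝ)+1))^3) := by
    intro c hc
    exact (summable_inv_cube.mul_left (2/c^3)).congr fun k => (hterm_eq c hc k).symm
  have htsum_c : ∀ c : ℝ, 0 < c → ∑' k : ℕ, 2/(c*((k:ℝ)+1))^3 = (2/c^3) * Z := by
    intro c hc
    rw [tsum_congr (hterm_eq c hc), tsum_mul_left]
  have hgnn : ∀ (c : ℝ) (k : ℕ), ∀ x ∈ Ioo (0:ℝ) 1, 0 ≤ gAux c k x := fun c k x hx =>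
    mul_nonneg (Real.rpow_pos_of_pos hx.1 _).le (sq_nonneg _)
  have hF_int : ∀ k : ℕ,
      Integrable (FAux (n+1) (p+1) k) ((volume : Measure ℝ).restrict (Ioo 0 1)) :=
    fun k => (hI _ ha k).sub (hI _ hb k)
  have hbound : ∀ k : ℕ, (∫ x in Ioo (0:ℝ) 1, ‖FAux (n+1) (p+1) k x‖)
      ≤ 2/((n+1)*((k:ℝ)+1))^3 + 2/((p+1)*((k:ℝ)+1))^3 := by
    intro k
    have hmono : ∀ x ∈ Ioo (0:ℝ) 1, ‖FAux (n+1) (p+1) k x‖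
        ≤ gAux (n+1) k x + gAux (p+1) k x := by
      intro x hx
      calc ‖FAux (n+1) (p+1) k x‖ ≤ ‖gAux (n+1) k x‖ + ‖gAux (p+1) k x‖ := norm_sub_le _ _
        _ = _ := by
            rw [Real.norm_of_nonneg (hgnn _ k x hx), Real.norm_of_nonneg (hgnn _ k x hx)]
    calc (∫ x in Ioo (0:ℝ) 1, ‖FAux (n+1) (p+1) k x‖)
        ≤ ∫ x in Ioo (0:ℝ) 1, (gAux (n+1) k x + gAux (p+1) k x) :=
          setIntegral_mono_on (hF_int k).norm ((hI _ ha k).add (hI _ hb k))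
            measurableSet_Ioo hmono
      _ = 2/((n+1)*((k:ℝ)+1))^3 + 2/((p+1)*((k:ℝ)+1))^3 := by
          rw [integral_add (hI _ ha k) (hI _ hb k), hval _ ha k, hval _ hb k]
  have hF_sum : Summable (fun k : ℕ => ∫ x in Ioo (0:ℝ) 1, ‖FAux (n+1) (p+1) k x‖) :=
    Summable.of_nonneg_of_le (fun k => integral_nonneg fun x => norm_nonneg _) hbound
      ((hsum_c _ ha).add (hsum_c _ hb))
  have hswap := integral_tsum_of_summable_integral_norm hF_int hF_sum
  have hLHS : ∑' k : ℕ, (∫ x in Ioo (0:ℝ) 1, FAux (n+1) (p+1) k x)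
      = 2/(n+1)^3 * Z - 2/(p+1)^3 * Z := by
    have he : ∀ k : ℕ, (∫ x in Ioo (0:ℝ) 1, FAux (n+1) (p+1) k x)
        = 2/((n+1)*((k:ℝ)+1))^3 - 2/((p+1)*((k:ℝ)+1))^3 := by
      intro k
      simp only [FAux]
      rw [integral_sub (hI _ ha k) (hI _ hb k), hval _ ha k, hval _ hb k]
    rw [tsum_congr he, Summable.tsum_sub (hsum_c _ ha) (hsum_c _ hb), htsum_c _ ha, htsum_c _ hb]
  have hRHS : (∫ x in Ioo (0:ℝ) 1, ∑' k : ℕ, FAux (n+1) (p+1) k x)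
      = ∫ x in Ioo (0:ℝ) 1, (Real.log x) ^ 2 * (x ^ n - x ^ p) /
          ((x ^ (n + 1) - 1) * (x ^ (p + 1) - 1)) := by
    refine setIntegral_congr_fun measurableSet_Ioo fun x hx => ?_
    have s1 : Summable (fun k : ℕ => gAux (n+1) k x) := (geom_sum_aux ha hx).1
    have s2 : Summable (fun k : ℕ => gAux (p+1) k x) := (geom_sum_aux hb hx).1
    have t1 : ∑' k : ℕ, gAux (n+1) k x
        = x ^ (n+1-1) * (Real.log x)^2 / (1 - x ^ (n+1)) := (geom_sum_aux ha hx).2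
    have t2 : ∑' k : ℕ, gAux (p+1) k x
        = x ^ (p+1-1) * (Real.log x)^2 / (1 - x ^ (p+1)) := (geom_sum_aux hb hx).2
    simp only [FAux]
    rw [Summable.tsum_sub s1 s2, t1, t2, integrand_eq hn hp hx,
      show n+1-1 = n by ring, show p+1-1 = p by ring]
  have hreal : (∫ x in (0:ℝ)..1,
      (Real.log x) ^ 2 * (x ^ n - x ^ p) / ((x ^ (n + 1) - 1) * (x ^ (p + 1) - 1)))
      = 2/(n+1)^3 * Z - 2/(p+1)^3 * Z := by
    rw [intervalIntegral.integral_of_le zero_le_one, integral_Ioc_eq_integral_Ioo,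
      ← hRHS, ← hswap, hLHS]
  rw [hreal]
  have hzeta : riemannZeta 3 = (Z : ℂ) := by
    rw [zeta_eq_tsum_one_div_nat_add_one_cpow (by norm_num), hZ, Complex.ofReal_tsum]
    refine tsum_congr fun k => ?_
    rw [show (3:ℂ) = ((3:ℕ):ℂ) by norm_num, Complex.cpow_natCast]
    push_cast
    norm_num
  rw [hzeta]
  push_cast
  ring
end

section
/- The integral over x from 0 to 1 of log(x) * log(1 - x^2) * Log(log x) / x dx, where Log denotes the principal-branch complex logarithm (so Log(log x) = log(-log x) + iπ for 0 < x < 1), equals (1/4) * ( ζ'(3) + ζ(3) * (1 - γ + iπ - log 2) ). -/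
open Real MeasureTheory Set
open scoped Topology

lemma aux_congrOn {E : Type*} [NormedAddCommGroup E] {f g : ℝ → E}
    (hf : IntegrableOn f (Ioi (0:ℝ))) (h : ∀ t ∈ Ioi (0:ℝ), f t = g t) :
    IntegrableOn g (Ioi (0:ℝ)) :=
  hf.congr_fun h measurableSet_Ioi

lemma aux_ofReal_integral (f : ℝ → ℝ) (s : Set ℝ) :
    ∫ t in s, (f t : ℂ) = ((∫ t in s, f t : ℝ) : ℂ) := integral_ofReal

lemma aux_log_le {u : ℝ} (hu : 0 < u) : Real.log u ≤ 2 * u ^ (1/2 : ℝ) := by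
  have h := Real.log_rpow hu (1/2 : ℝ)
  have h2 := Real.log_le_sub_one_of_pos (Real.rpow_pos_of_pos hu (1/2 : ℝ))
  have h3 : (0:ℝ) ≤ u ^ (1/2:ℝ) := (Real.rpow_pos_of_pos hu _).le
  nlinarith [Real.log_rpow hu (1/2 : ℝ)]

lemma aux_abs_log_le {t : ℝ} (ht : 0 < t) :
    |Real.log t| ≤ 2 * t ^ (1/2 : ℝ) + 2 * t ^ (-(1/2) : ℝ) := by
  have hpos : (0:ℝ) ≤ 2 * t ^ (1/2 : ℝ) := by positivity
  have hpos' : (0:ℝ) ≤ 2 * t ^ (-(1/2) : ℝ) := by positivity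
  rcases abs_cases (Real.log t) with ⟨h, _⟩ | ⟨h, _⟩
  · rw [h]; linarith [aux_log_le ht]
  · rw [h]
    have hinv : Real.log t⁻¹ ≤ 2 * (t⁻¹) ^ (1/2 : ℝ) := aux_log_le (inv_pos.mpr ht)
    rw [Real.log_inv, Real.inv_rpow ht.le, ← Real.rpow_neg ht.le] at hinv
    linarith

-- integrability of t * log t * exp (-t) on Ioi 0
lemma aux_integrable_tlog : IntegrableOn (fun t : ℝ => t * Real.log t * Real.exp (-t)) (Ioi 0) := by
  have h1 : IntegrableOn (fun t : ℝ => Real.exp (-t) * t ^ ((5/2 : ℝ) - 1)) (Ioi 0) :=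
    Real.GammaIntegral_convergent (by norm_num)
  have h2 : IntegrableOn (fun t : ℝ => Real.exp (-t) * t ^ ((3/2 : ℝ) - 1)) (Ioi 0) :=
    Real.GammaIntegral_convergent (by norm_num)
  refine Integrable.mono' ((h1.const_mul 2).add (h2.const_mul 2)) ?_ ?_
  · refine (ContinuousOn.aestronglyMeasurable ?_ measurableSet_Ioi)
    exact ((continuousOn_id.mul (Real.continuousOn_log.mono (by
      intro x hx; exact ne_of_gt hx))).mul (Real.continuous_exp.comp continuous_neg).continuousOn)
  · filter_upwards [ae_restrict_mem measurableSet_Ioi] with t ht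
    have ht' : (0:ℝ) < t := ht
    have hb := aux_abs_log_le ht'
    have he : (0:ℝ) < Real.exp (-t) := Real.exp_pos _
    have : |t * Real.log t * Real.exp (-t)| = t * |Real.log t| * Real.exp (-t) := by
      rw [abs_mul, abs_mul, abs_of_pos ht', abs_of_pos he]
    simp only [Pi.add_apply, Real.norm_eq_abs]
    rw [this]
    have h3 : t * |Real.log t| * Real.exp (-t)
        ≤ t * (2 * t ^ (1/2:ℝ) + 2 * t ^ (-(1/2):ℝ)) * Real.exp (-t) := by
      have := mul_le_mul_of_nonneg_left hb ht'.le
      exact mul_le_mul_of_nonneg_right this he.le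
    refine h3.trans (le_of_eq ?_)
    have e1 : t * t ^ (1/2:ℝ) = t ^ ((5/2:ℝ) - 1) := by
      rw [show t * t ^ (1/2:ℝ) = t ^ (1:ℝ) * t ^ (1/2:ℝ) by rw [Real.rpow_one],
        ← Real.rpow_add ht']
      norm_num
    have e2 : t * t ^ (-(1/2):ℝ) = t ^ ((3/2:ℝ) - 1) := by
      rw [show t * t ^ (-(1/2):ℝ) = t ^ (1:ℝ) * t ^ (-(1/2):ℝ) by rw [Real.rpow_one],
        ← Real.rpow_add ht']
      norm_num
    rw [← e1, ← e2]
    ring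

lemma aux_integrable_texp : IntegrableOn (fun t : ℝ => t * Real.exp (-t)) (Ioi 0) := by
  have h := Real.GammaIntegral_convergent (s := 2) (by norm_num)
  refine h.congr_fun (fun t ht => ?_) measurableSet_Ioi
  rw [show (2:ℝ) - 1 = 1 by norm_num]; simp only [Real.rpow_one]; ring

lemma aux_int_texp : ∫ t in Ioi (0:ℝ), t * Real.exp (-t) = 1 := by
  have h := (Real.Gamma_eq_integral (s := 2) (by norm_num)).symm
  rw [setIntegral_congr_fun measurableSet_Ioi (fun t ht => ?_), h]
  · exact Real.Gamma_two
  · rw [show (2:ℝ) - 1 = 1 by norm_num, Real.rpow_one]; ring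

lemma aux_int_tlog : ∫ t in Ioi (0:ℝ), t * Real.log t * Real.exp (-t)
    = 1 - Real.eulerMascheroniConstant := by
  have hd : deriv Complex.Gamma 2 = 1 - (Real.eulerMascheroniConstant : ℂ) := by
    have := Complex.deriv_Gamma_nat 1
    norm_num [harmonic_succ] at this
    rw [this]; ring
  have heq : deriv Complex.Gamma 2 = deriv Complex.GammaIntegral 2 := by
    apply Filter.EventuallyEq.deriv_eq
    have hopen : IsOpen {s : ℂ | 0 < s.re} := by
      exact isOpen_lt continuous_const Complex.continuous_re
    filter_upwards [hopen.mem_nhds (by norm_num : (0:ℝ) < (2:ℂ).re)] with s hs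
    exact Complex.Gamma_eq_integral hs
  have hI := (Complex.hasDerivAt_GammaIntegral (s := 2) (by norm_num)).deriv
  rw [heq, hI] at hd
  have : (∫ t in Ioi (0:ℝ), (t:ℂ) ^ ((2:ℂ) - 1) * (Real.log t * Real.exp (-t)))
      = ((∫ t in Ioi (0:ℝ), t * Real.log t * Real.exp (-t) : ℝ) : ℂ) := by
    rw [← aux_ofReal_integral (fun t => t * Real.log t * Real.exp (-t))]
    refine setIntegral_congr_fun measurableSet_Ioi (fun t ht => ?_)
    rw [show (2:ℂ) - 1 = 1 by norm_num, Complex.cpow_one]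
    push_cast
    ring
  rw [this] at hd
  exact_mod_cast hd

section scaling
variable {a : ℝ} (ha : 0 < a)
include ha

lemma aux_integrable_texp_a : IntegrableOn (fun t : ℝ => t * Real.exp (-(a*t))) (Ioi 0) := by
  have h := (integrableOn_Ioi_comp_mul_left_iff (fun t : ℝ => t * Real.exp (-t)) 0 ha).mpr
    (by simpa using aux_integrable_texp)
  have h' : IntegrableOn (fun x : ℝ => a⁻¹ * (a * x * Real.exp (-(a * x)))) (Ioi 0) :=
    h.const_mul a⁻¹
  refine h'.congr_fun (fun t ht => ?_) measurableSet_Ioi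
  field_simp

lemma aux_int_texp_a : ∫ t in Ioi (0:ℝ), t * Real.exp (-(a*t)) = 1/a^2 := by
  have h := integral_comp_mul_left_Ioi (fun t : ℝ => t * Real.exp (-t)) 0 ha
  rw [mul_zero, aux_int_texp, smul_eq_mul, mul_one] at h
  have : ∫ t in Ioi (0:ℝ), a * t * Real.exp (-(a*t)) = a⁻¹ := h
  have h2 : ∫ t in Ioi (0:ℝ), a * (t * Real.exp (-(a*t))) = a⁻¹ := by
    rw [← this]; congr 1; ext t; ring
  rw [MeasureTheory.integral_const_mul] at h2
  have ha' : a ≠ 0 := ha.ne'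
  field_simp at h2 ⊢
  linarith [h2]

end scaling

lemma aux_integrable_tlogabs : IntegrableOn (fun t : ℝ => t * |Real.log t| * Real.exp (-t)) (Ioi 0) := by
  refine aux_congrOn aux_integrable_tlog.abs (fun t ht => ?_)
  have ht' : (0:ℝ) < t := ht
  rw [abs_mul, abs_mul, abs_of_pos ht', abs_of_pos (Real.exp_pos _)]

section scaling2
variable {a : ℝ} (ha : 0 < a)
include ha

lemma aux_eq_comb (t : ℝ) (ht : t ∈ Ioi (0:ℝ)) :
    t * Real.log t * Real.exp (-(a*t))
      = a⁻¹ * ((a*t) * Real.log (a*t) * Real.exp (-(a*t))) - Real.log a * (t * Real.exp (-(a*t))) := by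
  have ht' : (0:ℝ) < t := ht
  rw [Real.log_mul ha.ne' ht'.ne']
  field_simp
  ring

lemma aux_integrable_tlog_a :
    IntegrableOn (fun t : ℝ => t * Real.log t * Real.exp (-(a*t))) (Ioi 0) := by
  have h := (integrableOn_Ioi_comp_mul_left_iff (fun t : ℝ => t * Real.log t * Real.exp (-t)) 0 ha).mpr
    (by simpa using aux_integrable_tlog)
  have h2 := (h.const_mul a⁻¹).sub ((aux_integrable_texp_a ha).const_mul (Real.log a))
  refine aux_congrOn h2 (fun t ht => (aux_eq_comb ha t ht).symm)

lemma aux_int_tlog_a :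
    ∫ t in Ioi (0:ℝ), t * Real.log t * Real.exp (-(a*t))
      = (1 - Real.eulerMascheroniConstant - Real.log a)/a^2 := by
  have hcomp := integral_comp_mul_left_Ioi (fun t : ℝ => t * Real.log t * Real.exp (-t)) 0 ha
  rw [mul_zero, aux_int_tlog, smul_eq_mul] at hcomp
  have h := (integrableOn_Ioi_comp_mul_left_iff (fun t : ℝ => t * Real.log t * Real.exp (-t)) 0 ha).mpr
    (by simpa using aux_integrable_tlog)
  rw [setIntegral_congr_fun measurableSet_Ioi (aux_eq_comb ha),
    integral_sub (h.const_mul a⁻¹) ((aux_integrable_texp_a ha).const_mul (Real.log a)),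
    MeasureTheory.integral_const_mul, MeasureTheory.integral_const_mul, hcomp,
    aux_int_texp_a ha]
  field_simp

lemma aux_integrable_tlogabs_a :
    IntegrableOn (fun t : ℝ => t * |Real.log t| * Real.exp (-(a*t))) (Ioi 0) := by
  refine aux_congrOn (aux_integrable_tlog_a ha).abs (fun t ht => ?_)
  have ht' : (0:ℝ) < t := ht
  rw [abs_mul, abs_mul, abs_of_pos ht', abs_of_pos (Real.exp_pos _)]

lemma aux_int_tlogabs_le (ha1 : 1 ≤ a) :
    ∫ t in Ioi (0:ℝ), t * |Real.log t| * Real.exp (-(a*t))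
      ≤ ((∫ t in Ioi (0:ℝ), t * |Real.log t| * Real.exp (-t)) + Real.log a)/a^2 := by
  have hcomp_int := (integrableOn_Ioi_comp_mul_left_iff
      (fun t : ℝ => t * |Real.log t| * Real.exp (-t)) 0 ha).mpr (by simpa using aux_integrable_tlogabs)
  have hrhs : IntegrableOn (fun t : ℝ =>
      a⁻¹ * ((a*t) * |Real.log (a*t)| * Real.exp (-(a*t))) + Real.log a * (t * Real.exp (-(a*t)))) (Ioi 0) :=
    (hcomp_int.const_mul a⁻¹).add ((aux_integrable_texp_a ha).const_mul (Real.log a))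
  have hmono := setIntegral_mono_on (aux_integrable_tlogabs_a ha) hrhs measurableSet_Ioi
    (fun t ht => ?_)
  · have hcomp := integral_comp_mul_left_Ioi (fun t : ℝ => t * |Real.log t| * Real.exp (-t)) 0 ha
    rw [mul_zero, smul_eq_mul] at hcomp
    rw [integral_add (hcomp_int.const_mul a⁻¹) ((aux_integrable_texp_a ha).const_mul (Real.log a)),
      MeasureTheory.integral_const_mul, MeasureTheory.integral_const_mul, hcomp,
      aux_int_texp_a ha] at hmono
    refine hmono.trans (le_of_eq ?_)
    field_simp
  · have ht' : (0:ℝ) < t := ht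
    have hlog : |Real.log t| ≤ |Real.log (a*t)| + Real.log a := by
      have : Real.log t = Real.log (a*t) - Real.log a := by
        rw [Real.log_mul ha.ne' ht'.ne']; ring
      rw [this]
      have := abs_sub (Real.log (a*t)) (Real.log a)
      calc |Real.log (a*t) - Real.log a| ≤ |Real.log (a*t)| + |Real.log a| := abs_sub _ _
        _ = |Real.log (a*t)| + Real.log a := by rw [abs_of_nonneg (Real.log_nonneg ha1)]
    have he : (0:ℝ) < Real.exp (-(a*t)) := Real.exp_pos _
    have h1 : t * |Real.log t| * Real.exp (-(a*t))
        ≤ t * (|Real.log (a*t)| + Real.log a) * Real.exp (-(a*t)) := by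
      have := mul_le_mul_of_nonneg_left hlog ht'.le
      exact mul_le_mul_of_nonneg_right this he.le
    refine h1.trans (le_of_eq ?_)
    field_simp

end scaling2

noncomputable def auxF (n : ℕ) (t : ℝ) : ℂ :=
  ((t * Real.exp (-(2*((n:ℝ)+1)*t)) / ((n:ℝ)+1) : ℝ) : ℂ) *
    ((Real.log t : ℂ) + (π : ℂ) * Complex.I)

lemma aux_np1_pos (n : ℕ) : (0:ℝ) < (n:ℝ)+1 := by positivity

lemma aux_a_pos (n : ℕ) : (0:ℝ) < 2*((n:ℝ)+1) := by positivity

lemma auxF_integrable (n : ℕ) : IntegrableOn (auxF n) (Ioi (0:ℝ)) := by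
  have h1 := (aux_integrable_tlog_a (aux_a_pos n)).ofReal (𝕜 := ℂ)
  have h2 := (aux_integrable_texp_a (aux_a_pos n)).ofReal (𝕜 := ℂ)
  have h3 : IntegrableOn (fun t : ℝ =>
      (((n:ℝ)+1)⁻¹ : ℂ) * ((t * Real.log t * Real.exp (-(2*((n:ℝ)+1)*t)) : ℝ) : ℂ)
        + (π : ℂ) * Complex.I * ((((n:ℝ)+1)⁻¹ : ℂ) * ((t * Real.exp (-(2*((n:ℝ)+1)*t)) : ℝ) : ℂ)))
      (Ioi (0:ℝ)) := by
    exact (h1.const_mul _).add ((h2.const_mul _).const_mul _)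
  refine aux_congrOn h3 (fun t ht => ?_)
  unfold auxF
  push_cast
  have hne : ((n:ℝ)+1 : ℂ) ≠ 0 := by
    exact_mod_cast (aux_np1_pos n).ne'
  field_simp

lemma auxF_integral (n : ℕ) : ∫ t in Ioi (0:ℝ), auxF n t
    = ((1 - Real.eulerMascheroniConstant - Real.log 2 - Real.log ((n:ℝ)+1) : ℝ) : ℂ)
        / (4 * ((n:ℝ)+1:ℝ)^3 : ℝ)
      + (π : ℂ) * Complex.I / ((4 * ((n:ℝ)+1:ℝ)^3 : ℝ) : ℂ) := by
  have h1 := (aux_integrable_tlog_a (aux_a_pos n)).ofReal (𝕜 := ℂ)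
  have h2 := (aux_integrable_texp_a (aux_a_pos n)).ofReal (𝕜 := ℂ)
  have hne : ((n:ℝ)+1 : ℂ) ≠ 0 := by exact_mod_cast (aux_np1_pos n).ne'
  have hA : Integrable (fun t : ℝ => ((((n:ℝ)+1)⁻¹ : ℂ) * ((t * Real.log t * Real.exp (-(2*((n:ℝ)+1)*t)) : ℝ) : ℂ)))
      (MeasureTheory.volume.restrict (Ioi (0:ℝ))) := h1.const_mul _
  have hB : Integrable (fun t : ℝ => ((π : ℂ) * Complex.I * ((((n:ℝ)+1)⁻¹ : ℂ)
      * ((t * Real.exp (-(2*((n:ℝ)+1)*t)) : ℝ) : ℂ)))) (MeasureTheory.volume.restrict (Ioi (0:ℝ))) :=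
    (h2.const_mul _).const_mul _
  have key : ∫ t in Ioi (0:ℝ), auxF n t
      = (((n:ℝ)+1)⁻¹ : ℂ) * ((∫ t in Ioi (0:ℝ), t * Real.log t * Real.exp (-(2*((n:ℝ)+1)*t)) : ℝ) : ℂ)
        + (π : ℂ) * Complex.I * ((((n:ℝ)+1)⁻¹ : ℂ)
            * ((∫ t in Ioi (0:ℝ), t * Real.exp (-(2*((n:ℝ)+1)*t)) : ℝ) : ℂ)) := by
    rw [setIntegral_congr_fun measurableSet_Ioi (show Set.EqOn (auxF n)
        (fun t : ℝ => ((((n:ℝ)+1)⁻¹ : ℂ) * ((t * Real.log t * Real.exp (-(2*((n:ℝ)+1)*t)) : ℝ) : ℂ))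
          + ((π : ℂ) * Complex.I * ((((n:ℝ)+1)⁻¹ : ℂ)
            * ((t * Real.exp (-(2*((n:ℝ)+1)*t)) : ℝ) : ℂ)))) (Ioi (0:ℝ)) from fun t ht => ?_),
      integral_add hA hB, MeasureTheory.integral_const_mul, MeasureTheory.integral_const_mul,
      MeasureTheory.integral_const_mul, aux_ofReal_integral (fun t => t * Real.log t * Real.exp (-(2*((n:ℝ)+1)*t))),
      aux_ofReal_integral (fun t => t * Real.exp (-(2*((n:ℝ)+1)*t)))]
    unfold auxF
    push_cast
    field_simp
  rw [key, aux_int_tlog_a (aux_a_pos n), aux_int_texp_a (aux_a_pos n),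
    Real.log_mul (by norm_num) (aux_np1_pos n).ne']
  have hne4 : ((4 * ((n:ℝ)+1)^3 : ℝ) : ℂ) ≠ 0 := by
    exact_mod_cast (by positivity : (4 * ((n:ℝ)+1)^3 : ℝ) ≠ 0)
  push_cast
  field_simp
  ring

lemma auxF_norm_le (n : ℕ) {t : ℝ} (ht : 0 < t) :
    ‖auxF n t‖ ≤ (t * |Real.log t| * Real.exp (-(2*((n:ℝ)+1)*t))
      + π * (t * Real.exp (-(2*((n:ℝ)+1)*t)))) / ((n:ℝ)+1) := by
  unfold auxF
  rw [norm_mul, Complex.norm_real]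
  have h1 : ‖(Real.log t : ℂ) + (π : ℂ) * Complex.I‖ ≤ |Real.log t| + π := by
    refine (norm_add_le _ _).trans ?_
    rw [norm_mul, Complex.norm_real, Complex.norm_I, mul_one, Complex.norm_real,
      Real.norm_eq_abs, Real.norm_eq_abs, abs_of_pos Real.pi_pos]
  have h0 : ‖(t * Real.exp (-(2*((n:ℝ)+1)*t)) / ((n:ℝ)+1) : ℝ)‖
      = t * Real.exp (-(2*((n:ℝ)+1)*t)) / ((n:ℝ)+1) := by
    rw [Real.norm_eq_abs, abs_of_pos]
    positivity
  rw [h0]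
  have hfac : (0:ℝ) ≤ t * Real.exp (-(2*((n:ℝ)+1)*t)) / ((n:ℝ)+1) := by positivity
  calc t * Real.exp (-(2*((n:ℝ)+1)*t)) / ((n:ℝ)+1) * ‖(Real.log t : ℂ) + (π : ℂ) * Complex.I‖
      ≤ t * Real.exp (-(2*((n:ℝ)+1)*t)) / ((n:ℝ)+1) * (|Real.log t| + π) :=
        mul_le_mul_of_nonneg_left h1 hfac
    _ = (t * |Real.log t| * Real.exp (-(2*((n:ℝ)+1)*t))
          + π * (t * Real.exp (-(2*((n:ℝ)+1)*t)))) / ((n:ℝ)+1) := by ring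

lemma auxF_norm_integral_le (n : ℕ) :
    ∫ t in Ioi (0:ℝ), ‖auxF n t‖
      ≤ (((∫ t in Ioi (0:ℝ), t * |Real.log t| * Real.exp (-t)) + Real.log 2 + π + 1))
          * (((n:ℝ)+1)^2)⁻¹ / 4 := by
  set a : ℝ := 2*((n:ℝ)+1) with ha_def
  have ha : (0:ℝ) < a := aux_a_pos n
  have ha1 : (1:ℝ) ≤ a := by
    have := aux_np1_pos n
    simp only [ha_def]
    nlinarith [Nat.cast_nonneg (α := ℝ) n]
  set C : ℝ := ∫ t in Ioi (0:ℝ), t * |Real.log t| * Real.exp (-t) with hC_def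
  have hC0 : 0 ≤ C := by
    refine setIntegral_nonneg measurableSet_Ioi (fun t ht => ?_)
    have : (0:ℝ) < t := ht
    positivity
  have hrhs_int : IntegrableOn (fun t : ℝ =>
      (t * |Real.log t| * Real.exp (-(a*t)) + π * (t * Real.exp (-(a*t)))) / ((n:ℝ)+1)) (Ioi 0) := by
    exact (((aux_integrable_tlogabs_a ha).add ((aux_integrable_texp_a ha).const_mul π)).div_const _)
  have step1 : ∫ t in Ioi (0:ℝ), ‖auxF n t‖
      ≤ ∫ t in Ioi (0:ℝ), (t * |Real.log t| * Real.exp (-(a*t))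
          + π * (t * Real.exp (-(a*t)))) / ((n:ℝ)+1) := by
    refine setIntegral_mono_on (auxF_integrable n).norm hrhs_int measurableSet_Ioi
      (fun t ht => auxF_norm_le n ht)
  refine step1.trans ?_
  rw [MeasureTheory.integral_div, integral_add (aux_integrable_tlogabs_a ha)
    ((aux_integrable_texp_a ha).const_mul π), MeasureTheory.integral_const_mul, aux_int_texp_a ha]
  have hlogle := aux_int_tlogabs_le ha ha1
  rw [← hC_def] at hlogle
  have hlog_a : Real.log a = Real.log 2 + Real.log ((n:ℝ)+1) := by
    rw [ha_def, Real.log_mul (by norm_num) (aux_np1_pos n).ne']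
  have hlogn : Real.log ((n:ℝ)+1) ≤ (n:ℝ)+1 := by
    have := Real.log_le_sub_one_of_pos (aux_np1_pos n)
    linarith
  have hnp : (0:ℝ) < (n:ℝ)+1 := aux_np1_pos n
  have ha2 : a^2 = 4*((n:ℝ)+1)^2 := by rw [ha_def]; ring
  have hπ : (0:ℝ) < π := Real.pi_pos
  rw [div_le_iff₀ hnp, ha2]
  rw [ha2] at hlogle
  have hbound : (∫ t in Ioi (0:ℝ), t * |Real.log t| * Real.exp (-(a*t)))
      ≤ (C + Real.log 2 + ((n:ℝ)+1)) / (4*((n:ℝ)+1)^2) := by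
    refine hlogle.trans ?_
    rw [hlog_a]
    have h4 : (0:ℝ) < 4*((n:ℝ)+1)^2 := by positivity
    exact (div_le_div_iff_of_pos_right h4).mpr (by linarith)
  have hD : (0:ℝ) ≤ C + Real.log 2 + π := by
    have := Real.log_nonneg (by norm_num : (1:ℝ) ≤ 2)
    linarith
  have expand : (C + Real.log 2 + π + 1) * (((n:ℝ)+1)^2)⁻¹ / 4 * ((n:ℝ)+1)
      - ((C + Real.log 2 + ((n:ℝ)+1)) / (4*((n:ℝ)+1)^2) + π * (1/(4*((n:ℝ)+1)^2)))
      = (C + Real.log 2 + π) * (n:ℝ) / (4*((n:ℝ)+1)^2) := by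
    field_simp
    ring
  have hnn : (0:ℝ) ≤ (C + Real.log 2 + π) * (n:ℝ) / (4*((n:ℝ)+1)^2) := by
    have hn0 : (0:ℝ) ≤ (n:ℝ) := Nat.cast_nonneg n
    positivity
  linarith [hbound]

lemma auxF_hasSum {t : ℝ} (ht : 0 < t) :
    HasSum (fun n => auxF n t)
      ((-(t * Real.log (1 - Real.exp (-(2*t)))) : ℝ) * ((Real.log t : ℂ) + (π : ℂ) * Complex.I)) := by
  have hx0 : (0:ℝ) < Real.exp (-(2*t)) := Real.exp_pos _
  have hx1 : Real.exp (-(2*t)) < 1 := by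
    rw [Real.exp_lt_one_iff]
    linarith
  have habs : |Real.exp (-(2*t))| < 1 := by rw [abs_of_pos hx0]; exact hx1
  have h := Real.hasSum_pow_div_log_of_abs_lt_one habs
  have h2 := h.mul_left t
  have h3 := h2.mapL Complex.ofRealCLM
  have h4 := h3.mul_right ((Real.log t : ℂ) + (π : ℂ) * Complex.I)
  have : (fun n : ℕ => Complex.ofRealCLM (t * (Real.exp (-(2*t)) ^ (n+1) / ((n:ℝ)+1)))
      * ((Real.log t : ℂ) + (π : ℂ) * Complex.I)) = fun n => auxF n t := by
    funext n
    unfold auxF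
    have he : Real.exp (-(2*t)) ^ (n+1) = Real.exp (-(2*((n:ℝ)+1)*t)) := by
      rw [← Real.exp_nat_mul]
      congr 1
      push_cast
      ring
    simp only [Complex.ofRealCLM_apply, he]
    push_cast
    ring
  rw [this] at h4
  rw [show (((-(t * Real.log (1 - Real.exp (-(2*t)))) : ℝ) : ℂ))
      = Complex.ofRealCLM (t * -Real.log (1 - Real.exp (-(2*t)))) by
    change _ = ((t * -Real.log (1 - Real.exp (-(2*t))) : ℝ) : ℂ)
    norm_num]
  exact h4

lemma aux_summable_norm_int :
    Summable (fun n => ∫ t in Ioi (0:ℝ), ‖auxF n t‖) := by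
  set C : ℝ := ∫ t in Ioi (0:ℝ), t * |Real.log t| * Real.exp (-t)
  have hs : Summable (fun n : ℕ => (C + Real.log 2 + π + 1) * (((n:ℝ)+1)^2)⁻¹ / 4) := by
    have h1 : Summable (fun n : ℕ => (((n:ℝ)+1)^2)⁻¹) := by
      have h2 := (Real.summable_one_div_nat_pow (p := 2)).mpr one_lt_two
      have h3 := (summable_nat_add_iff (f := fun n : ℕ => 1/(n:ℝ)^2) 1).mpr h2
      refine h3.congr (fun n => ?_)
      push_cast
      rw [one_div]
    exact (h1.mul_left _).div_const _
  refine Summable.of_nonneg_of_le (fun n => ?_) (fun n => auxF_norm_integral_le n) hs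
  exact setIntegral_nonneg measurableSet_Ioi (fun t ht => norm_nonneg _)

lemma aux_interchange :
    ∫ t in Ioi (0:ℝ), ((-(t * Real.log (1 - Real.exp (-(2*t)))) : ℝ) : ℂ)
        * ((Real.log t : ℂ) + (π : ℂ) * Complex.I)
      = ∑' n : ℕ, ∫ t in Ioi (0:ℝ), auxF n t := by
  rw [MeasureTheory.integral_tsum_of_summable_integral_norm (fun n => auxF_integrable n)
    aux_summable_norm_int]
  refine setIntegral_congr_fun measurableSet_Ioi (fun t ht => ?_)
  exact ((auxF_hasSum ht).tsum_eq).symm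

lemma aux_re3 : (1:ℝ) < (3:ℂ).re := by
  rw [show (3:ℂ) = ((3:ℝ):ℂ) by norm_num, Complex.ofReal_re]
  norm_num

lemma aux_zeta3 : ∑' n : ℕ, (1 : ℂ)/((n:ℂ)+1)^3 = riemannZeta 3 := by
  rw [zeta_eq_tsum_one_div_nat_add_one_cpow aux_re3]
  refine tsum_congr (fun n => ?_)
  rw [show (3:ℂ) = ((3:ℕ):ℂ) by norm_num, Complex.cpow_natCast]

lemma aux_abs_lt : LSeries.abscissaOfAbsConv 1 < (3:ℂ).re := by
  rw [LSeries.abscissaOfAbsConv_one]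
  exact_mod_cast aux_re3

lemma aux_summable_S1 : Summable (fun n : ℕ => (1 : ℂ)/((n:ℂ)+1)^3) := by
  have h := Complex.summable_one_div_nat_cpow (p := 3).mpr aux_re3
  have h2 := (summable_nat_add_iff (f := fun n : ℕ => 1/(n:ℂ)^(3:ℂ)) 1).mpr h
  refine h2.congr (fun n => ?_)
  push_cast
  rw [show (3:ℂ) = ((3:ℕ):ℂ) by norm_num, Complex.cpow_natCast]

lemma aux_summable_S2 :
    Summable (fun n : ℕ => ((Real.log ((n:ℝ)+1) : ℝ) : ℂ)/((n:ℂ)+1)^3) := by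
  have hsum := LSeriesSummable_logMul_of_lt_re (f := 1) aux_abs_lt
  have h2 := (summable_nat_add_iff (f := fun n : ℕ => LSeries.term (LSeries.logMul 1) 3 n) 1).mpr hsum
  refine h2.congr (fun n => ?_)
  rw [LSeries.term_of_ne_zero (Nat.succ_ne_zero n), LSeries.logMul]
  simp only [Pi.one_apply, mul_one]
  rw [← Complex.natCast_log, show (3:ℂ) = ((3:ℕ):ℂ) by norm_num, Complex.cpow_natCast]
  push_cast
  ring

lemma aux_zeta_deriv :
    ∑' n : ℕ, ((Real.log ((n:ℝ)+1) : ℝ) : ℂ)/((n:ℂ)+1)^3 = - deriv riemannZeta 3 := by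
  have hd : deriv riemannZeta 3 = deriv (LSeries 1) 3 := by
    apply Filter.EventuallyEq.deriv_eq
    have hopen : IsOpen {s : ℂ | 1 < s.re} := isOpen_lt continuous_const Complex.continuous_re
    filter_upwards [hopen.mem_nhds aux_re3] with s hs
    exact (LSeries_one_eq_riemannZeta hs).symm
  rw [hd, LSeries_deriv aux_abs_lt, neg_neg]
  have hsum := LSeriesSummable_logMul_of_lt_re (f := 1) aux_abs_lt
  rw [LSeries, Summable.tsum_eq_zero_add hsum]
  rw [LSeries.term_zero, zero_add]
  refine (tsum_congr (fun n => ?_)).symm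
  rw [LSeries.term_of_ne_zero (Nat.succ_ne_zero n), LSeries.logMul]
  simp only [Pi.one_apply, mul_one]
  rw [← Complex.natCast_log, show (3:ℂ) = ((3:ℕ):ℂ) by norm_num, Complex.cpow_natCast]
  push_cast
  ring

lemma aux_tsum_value :
    ∑' n : ℕ, ∫ t in Ioi (0:ℝ), auxF n t
      = (1 / 4) * (deriv riemannZeta 3 + riemannZeta 3
          * (1 - (Real.eulerMascheroniConstant : ℂ) + (π : ℂ) * Complex.I - (Real.log 2 : ℂ))) := by
  have hterm : ∀ n : ℕ, (∫ t in Ioi (0:ℝ), auxF n t)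
      = (((1 - Real.eulerMascheroniConstant - Real.log 2 : ℝ) : ℂ) + (π:ℂ) * Complex.I)/4
          * ((1:ℂ)/((n:ℂ)+1)^3)
        + (-(1:ℂ)/4) * (((Real.log ((n:ℝ)+1) : ℝ) : ℂ)/((n:ℂ)+1)^3) := by
    intro n
    rw [auxF_integral n]
    have hne : ((n:ℂ)+1) ≠ 0 := by
      have : ((n:ℝ)+1 : ℂ) ≠ 0 := by exact_mod_cast (aux_np1_pos n).ne'
      exact_mod_cast this
    push_cast
    field_simp
    ring
  rw [tsum_congr hterm, Summable.tsum_add ((aux_summable_S1).mul_left _) ((aux_summable_S2).mul_left _),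
    tsum_mul_left, tsum_mul_left, aux_zeta3, aux_zeta_deriv]
  push_cast
  ring

lemma aux_clog_neg {t : ℝ} (ht : 0 < t) :
    Complex.log ((-t : ℝ) : ℂ) = (Real.log t : ℂ) + (π : ℂ) * Complex.I := by
  have h1 : ‖((-t : ℝ) : ℂ)‖ = t := by
    rw [Complex.norm_real, Real.norm_eq_abs, abs_neg, abs_of_pos ht]
  have h2 : Complex.arg ((-t : ℝ) : ℂ) = π := by
    exact Complex.arg_ofReal_of_neg (by simpa using ht)
  apply Complex.ext
  · simp [Complex.log_re, h1]
  · rw [Complex.log_im, h2]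
    simp [Complex.add_im]

lemma aux_image : (fun t : ℝ => Real.exp (-t)) '' (Ioi 0) = Ioo (0:ℝ) 1 := by
  ext y
  constructor
  · rintro ⟨t, ht, rfl⟩
    have ht' : (0:ℝ) < t := ht
    exact ⟨Real.exp_pos _, by rw [Real.exp_lt_one_iff]; linarith⟩
  · rintro ⟨hy0, hy1⟩
    refine ⟨-Real.log y, ?_, by show Real.exp (-(-Real.log y)) = y; rw [neg_neg, Real.exp_log hy0]⟩
    simp only [mem_Ioi]
    have := Real.log_neg hy0 hy1
    linarith

lemma aux_subst :
    ∫ x in Ioo (0:ℝ) 1, ((Real.log x : ℂ) * (Real.log (1 - x^2) : ℂ)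
        * Complex.log ((Real.log x : ℝ) : ℂ) / (x : ℂ))
      = ∫ t in Ioi (0:ℝ), ((-(t * Real.log (1 - Real.exp (-(2*t)))) : ℝ) : ℂ)
          * ((Real.log t : ℂ) + (π : ℂ) * Complex.I) := by
  have hderiv : ∀ t ∈ Ioi (0:ℝ), HasDerivWithinAt (fun t : ℝ => Real.exp (-t))
      (-Real.exp (-t)) (Ioi 0) t := by
    intro t ht
    have h := (Real.hasDerivAt_exp (-t)).comp t (hasDerivAt_neg t)
    simpa [mul_comm, Function.comp_def] using h.hasDerivWithinAt
  have hinj : InjOn (fun t : ℝ => Real.exp (-t)) (Ioi 0) := by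
    intro a _ b _ h
    exact neg_injective (Real.exp_injective h)
  have h := integral_image_eq_integral_abs_deriv_smul measurableSet_Ioi hderiv hinj
    (fun x : ℝ => (Real.log x : ℂ) * (Real.log (1 - x^2) : ℂ)
        * Complex.log ((Real.log x : ℝ) : ℂ) / (x : ℂ))
  rw [aux_image] at h
  rw [h]
  refine setIntegral_congr_fun measurableSet_Ioi (fun t ht => ?_)
  have ht' : (0:ℝ) < t := ht
  have he : (0:ℝ) < Real.exp (-t) := Real.exp_pos _
  have hlog : Real.log (Real.exp (-t)) = -t := Real.log_exp _
  have hsq : Real.exp (-t)^2 = Real.exp (-(2*t)) := by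
    rw [show (-(2*t)) = ((2:ℕ):ℝ)*(-t) by push_cast; ring, Real.exp_nat_mul (-t) 2]
  simp only [abs_neg, abs_of_pos he, Complex.real_smul]
  rw [hlog, hsq, aux_clog_neg ht']
  have hene : ((Real.exp (-t) : ℝ) : ℂ) ≠ 0 := by exact_mod_cast he.ne'
  push_cast
  field_simp

theorem integral_log_mul_log_one_sub_sq_mul_clog_log :
    ∫ x in (0:ℝ)..1,
        (Real.log x : ℂ) * (Real.log (1 - x ^ 2) : ℂ) *
          Complex.log ((Real.log x : ℝ) : ℂ) / (x : ℂ) =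
      (1 / 4) * (deriv riemannZeta 3 +
        riemannZeta 3 *
          (1 - (Real.eulerMascheroniConstant : ℂ) + (π : ℂ) * Complex.I -
            (Real.log 2 : ℂ))) := by
  rw [intervalIntegral.integral_of_le (by norm_num : (0:ℝ) ≤ 1),
    MeasureTheory.integral_Ioc_eq_integral_Ioo, aux_subst, aux_interchange, aux_tsum_value]
end

section
/- The integral over x from 0 to 1 of artanh(x) / (x * √(-log x)) dx equals ((4 - √2)/4) * √π * ζ(3/2). -/
open Real

open MeasureTheory Set

lemma hasSum_artanh {x : ℝ} (h : |x| < 1) :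
    HasSum (fun k : ℕ => (1 / (2 * k + 1) : ℝ) * x ^ (2 * k + 1)) (_root_.artanh x) := by
  have h2 := (Real.hasSum_log_sub_log_of_abs_lt_one h).div_const 2
  unfold _root_.artanh
  convert h2 using 2 with k
  · rfl
  · ring

lemma term_integral (k : ℕ) :
    ∫ t in Ioi (0:ℝ), t ^ (-(1/2) : ℝ) * Real.exp (-((2*k+1 : ℝ) * t))
      = Real.sqrt π * (2*k+1 : ℝ) ^ (-(1/2) : ℝ) := by
  have h := Real.integral_rpow_mul_exp_neg_mul_Ioi (a := 1/2) (r := (2*k+1:ℝ))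
    (by norm_num) (by positivity)
  rw [show (1/2 - 1 : ℝ) = -(1/2) by norm_num] at h
  rw [h, Real.Gamma_one_half_eq, mul_comm]
  congr 1
  rw [one_div, Real.inv_rpow (by positivity), Real.rpow_neg (by positivity)]

noncomputable def F (k : ℕ) (t : ℝ) : ℝ :=
  (1 / (2*k+1) : ℝ) * (t ^ (-(1/2) : ℝ) * Real.exp (-((2*k+1 : ℝ) * t)))

lemma F_integrable (k : ℕ) : IntegrableOn (F k) (Ioi 0) := by
  apply Integrable.const_mul
  have h := integrableOn_rpow_mul_exp_neg_mul_rpow (s := -(1/2)) (p := 1) (b := (2*k+1:ℝ))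
    (by norm_num) zero_lt_one (by positivity)
  apply h.congr_fun ?_ measurableSet_Ioi
  intro x hx
  simp only [Real.rpow_one, neg_mul]

lemma summable_odd_rpow : Summable (fun k : ℕ => ((2*k+1 : ℝ)) ^ (-(3/2) : ℝ)) := by
  have hS : Summable (fun n : ℕ => (n : ℝ) ^ (-(3/2) : ℝ)) :=
    Real.summable_nat_rpow.2 (by norm_num)
  have hinj : Function.Injective (fun k : ℕ => 2*k+1) := fun a b h => by
    simpa using h
  have := hS.comp_injective hinj
  refine this.congr fun k => ?_
  simp only [Function.comp]
  push_cast
  ring_nf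

lemma F_key (k : ℕ) : ∫ t in Ioi (0:ℝ), F k t = Real.sqrt π * ((2*k+1 : ℝ)) ^ (-(3/2) : ℝ) := by
  unfold F
  rw [MeasureTheory.integral_const_mul, term_integral]
  have hr : (0:ℝ) < 2*k+1 := by positivity
  rw [show ((2*k+1:ℝ)) ^ (-(3/2) : ℝ) = (2*k+1:ℝ) ^ (-1 : ℝ) * (2*k+1:ℝ) ^ (-(1/2) : ℝ) by
    rw [← Real.rpow_add hr]; norm_num]
  rw [Real.rpow_neg_one]
  field_simp

lemma F_nonneg (k : ℕ) {t : ℝ} (ht : 0 ≤ t) : 0 ≤ F k t := by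
  unfold F; positivity

lemma F_meas (k : ℕ) : AEStronglyMeasurable (F k) (volume.restrict (Ioi 0)) := by
  apply Measurable.aestronglyMeasurable
  unfold F
  fun_prop

lemma swap_key :
    ∫ t in Ioi (0:ℝ), ∑' k : ℕ, F k t = ∑' k : ℕ, ∫ t in Ioi (0:ℝ), F k t := by
  apply MeasureTheory.integral_tsum (fun k => F_meas k)
  have hval : ∀ k : ℕ, ∫⁻ t in Ioi (0:ℝ), ‖F k t‖ₑ
      = ENNReal.ofReal (Real.sqrt π * ((2*k+1 : ℝ)) ^ (-(3/2) : ℝ)) := by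
    intro k
    have hpos : 0 ≤ᵐ[volume.restrict (Ioi (0:ℝ))] F k :=
      (MeasureTheory.ae_restrict_iff' measurableSet_Ioi).2
        (Filter.Eventually.of_forall fun t ht => F_nonneg k (le_of_lt ht))
    have h1 : ∫⁻ t in Ioi (0:ℝ), ‖F k t‖ₑ = ∫⁻ t in Ioi (0:ℝ), ENNReal.ofReal (F k t) := by
      apply MeasureTheory.lintegral_congr_ae
      refine hpos.mono fun t ht => ?_
      simp only
      rw [← ofReal_norm, Real.norm_of_nonneg (by simpa using ht)]
    rw [h1, ← MeasureTheory.ofReal_integral_eq_lintegral_ofReal (F_integrable k) hpos, F_key]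
  simp_rw [hval]
  rw [← ENNReal.ofReal_tsum_of_nonneg (fun k => by positivity)
    (summable_odd_rpow.mul_left (Real.sqrt π))]
  exact ENNReal.ofReal_ne_top

lemma image_exp_neg : (fun t : ℝ => Real.exp (-t)) '' Ioi 0 = Ioo 0 1 := by
  ext y
  constructor
  · rintro ⟨t, ht, rfl⟩
    exact ⟨Real.exp_pos _, Real.exp_lt_one_iff.2 (by simpa using ht)⟩
  · rintro ⟨h0, h1⟩
    exact ⟨-Real.log y, by simpa using Real.log_neg h0 h1, by
      simp [Real.exp_log h0]⟩


lemma pointwise_sum {t : ℝ} (ht : t ∈ Ioi (0:ℝ)) :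
    Real.exp (-t) * (_root_.artanh (Real.exp (-t)) /
        (Real.exp (-t) * Real.sqrt (-Real.log (Real.exp (-t)))))
      = ∑' k : ℕ, F k t := by
  have ht' : (0:ℝ) < t := ht
  have hx : |Real.exp (-t)| < 1 := by
    rw [abs_of_pos (Real.exp_pos _)]
    exact Real.exp_lt_one_iff.2 (by simpa using ht')
  have hs := (hasSum_artanh hx).div_const (Real.sqrt t)
  have hterm : ∀ k : ℕ,
      (1 / (2 * k + 1) : ℝ) * Real.exp (-t) ^ (2 * k + 1) / Real.sqrt t = F k t := by
    intro k
    unfold F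
    rw [← Real.exp_nat_mul, Real.sqrt_eq_rpow, Real.rpow_neg ht'.le, div_eq_mul_inv]
    push_cast
    ring_nf
  simp only [hterm] at hs
  rw [hs.tsum_eq, Real.log_exp, neg_neg]
  have he : Real.exp (-t) ≠ 0 := (Real.exp_pos _).ne'
  field_simp

lemma cov :
    ∫ x in Ioo (0:ℝ) 1, _root_.artanh x / (x * Real.sqrt (-Real.log x))
      = ∑' k : ℕ, Real.sqrt π * ((2*k+1 : ℝ)) ^ (-(3/2) : ℝ) := by
  have hderiv : ∀ t ∈ Ioi (0:ℝ),
      HasDerivWithinAt (fun t : ℝ => Real.exp (-t)) (-Real.exp (-t)) (Ioi 0) t := by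
    intro t _
    have := (Real.hasDerivAt_exp (-t)).comp t (hasDerivAt_neg t)
    simpa [mul_comm, Function.comp_def] using this.hasDerivWithinAt
  have hinj : InjOn (fun t : ℝ => Real.exp (-t)) (Ioi 0) :=
    fun a _ b _ h => neg_injective (Real.exp_injective h)
  have h := MeasureTheory.integral_image_eq_integral_abs_deriv_smul measurableSet_Ioi hderiv
    hinj (fun x => _root_.artanh x / (x * Real.sqrt (-Real.log x)))
  rw [image_exp_neg] at h
  rw [h]
  have h2 : ∀ t ∈ Ioi (0:ℝ),
      |(-Real.exp (-t))| • (_root_.artanh (Real.exp (-t)) /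
        (Real.exp (-t) * Real.sqrt (-Real.log (Real.exp (-t))))) = ∑' k : ℕ, F k t := by
    intro t ht
    rw [abs_neg, abs_of_pos (Real.exp_pos _), smul_eq_mul]
    exact pointwise_sum ht
  rw [MeasureTheory.setIntegral_congr_fun measurableSet_Ioi h2, swap_key]
  exact tsum_congr fun k => F_key k

lemma coeff_eq : (2:ℝ) ^ (-(3/2) : ℝ) = Real.sqrt 2 / 4 := by
  have h32 : ((3:ℝ)/2) = 1 + 1/2 := by norm_num
  rw [Real.rpow_neg (by norm_num), h32, Real.rpow_add two_pos, Real.rpow_one,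
    ← Real.sqrt_eq_rpow]
  have h2 : Real.sqrt 2 * Real.sqrt 2 = 2 := Real.mul_self_sqrt (by norm_num)
  have h2pos : (0:ℝ) < Real.sqrt 2 := Real.sqrt_pos.2 (by norm_num)
  field_simp
  nlinarith [h2]

lemma odd_tsum_eq :
    ∑' k : ℕ, ((2*k+1 : ℝ)) ^ (-(3/2) : ℝ)
      = (1 - (2:ℝ) ^ (-(3/2) : ℝ)) * ∑' n : ℕ, (n : ℝ) ^ (-(3/2) : ℝ) := by
  set f : ℕ → ℝ := fun n => (n : ℝ) ^ (-(3/2) : ℝ) with hf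
  have hS : Summable f := Real.summable_nat_rpow.2 (by norm_num)
  have heq : ∀ k : ℕ, f (2*k) = (2:ℝ) ^ (-(3/2) : ℝ) * f k := by
    intro k
    simp only [hf]
    push_cast
    rw [Real.mul_rpow (by norm_num) (Nat.cast_nonneg k)]
  have he : Summable fun k => f (2*k) := by
    refine Summable.congr (hS.mul_left ((2:ℝ) ^ (-(3/2):ℝ))) fun k => (heq k).symm
  have ho : Summable fun k => f (2*k+1) := by
    refine Summable.congr (hS.comp_injective (fun a b h => by simpa using h :
      Function.Injective (fun k : ℕ => 2*k+1))) fun k => rfl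
  have key := tsum_even_add_odd he ho
  have he' : ∑' k, f (2*k) = (2:ℝ) ^ (-(3/2) : ℝ) * ∑' n, f n := by
    rw [tsum_congr heq, tsum_mul_left]
  have ho' : ∑' k : ℕ, ((2*k+1 : ℝ)) ^ (-(3/2) : ℝ) = ∑' k, f (2*k+1) := by
    refine tsum_congr fun k => ?_
    simp only [hf]
    push_cast
    ring_nf
  rw [ho']
  rw [he'] at key
  linarith [key]

lemma zeta_32 : riemannZeta (3/2) = ((∑' n : ℕ, (n : ℝ) ^ (-(3/2) : ℝ) : ℝ) : ℂ) := by
  have h32 : (3/2 : ℂ) = ((3/2 : ℝ) : ℂ) := by norm_num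
  rw [h32, zeta_eq_tsum_one_div_nat_cpow (by simp; norm_num), Complex.ofReal_tsum]
  refine tsum_congr fun n => ?_
  rw [Real.rpow_neg (Nat.cast_nonneg n), Complex.ofReal_inv,
    Complex.ofReal_cpow (Nat.cast_nonneg n)]
  simp [one_div]

theorem integral_artanh_div_sqrt_neg_log :
    ((∫ x in (0:ℝ)..1, _root_.artanh x / (x * Real.sqrt (-Real.log x)) : ℝ) : ℂ) =
      (((4 - Real.sqrt 2) / 4 * Real.sqrt π : ℝ) : ℂ) * riemannZeta (3 / 2) := by
  rw [intervalIntegral.integral_of_le zero_le_one, MeasureTheory.integral_Ioc_eq_integral_Ioo,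
    cov, tsum_mul_left, odd_tsum_eq, coeff_eq, zeta_32]
  push_cast
  ring
end
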